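/- arXiv:2602.16522 — 8 statements merged into one kernel-verified Lean document; each statement's English description precedes it below -/
import Mathlib

section
/- If x is in a cycle of the variable transition graph of a substitution σ (i.e., x occurs in xσ^k for some k > 0) and xσ is not a variable, then the terms x, xσ, xσ², ... are pairwise distinct. -/
/-- First-order terms over a signature `S` with variables `V`. -/
inductive Tm (S V : Type) : Type
  | var : V → Tm S V
  | app : S → List (Tm S V) → Tm S V

namespace Tm
variable {S V : Type}

/-- Applying a substitution `σ : V → Tm S V` homomorphically to a term. -/
def subst (σ : V → Tm S V) : Tm S V → Tm S V
  | var x => σ x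
  | app f ts => app f (ts.attach.map fun u => subst σ u.1)
decreasing_by
  have := List.sizeOf_lt_of_mem u.2
  simp only [Tm.app.sizeOf_spec]
  omega

/-- The variable `x` occurs in the term `t`. -/
inductive Occurs (x : V) : Tm S V → Prop
  | var : Occurs x (var x)
  | app {f : S} {ts : List (Tm S V)} {t : Tm S V} :
      t ∈ ts → Occurs x t → Occurs x (app f ts)

/-- `iter σ n t` is `t σⁿ`, the `n`-fold application of `σ` to `t`. -/
def iter (σ : V → Tm S V) (n : ℕ) (t : Tm S V) : Tm S V :=
  (subst σ)^[n] t

end Tm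

namespace TmAux
open Tm
variable {S V : Type}

theorem subst_app (σ : V → Tm S V) (f : S) (ts : List (Tm S V)) :
    subst σ (app f ts) = app f (ts.map (subst σ)) := by
  rw [subst]; congr 1; simp [List.attach_map_val]

theorem subst_subst (σ ρ : V → Tm S V) :
    ∀ t : Tm S V, subst σ (subst ρ t) = subst (fun y => subst σ (ρ y)) t
  | .var x => by simp [subst]
  | .app f ts => by
      rw [subst_app, subst_app, subst_app, List.map_map]
      exact congrArg _ (List.map_congr_left fun u hu => subst_subst σ ρ u)
decreasing_by
  have := List.sizeOf_lt_of_mem hu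
  simp only [Tm.app.sizeOf_spec]
  omega

theorem subst_id : ∀ t : Tm S V, subst Tm.var t = t
  | .var x => by simp [subst]
  | .app f ts => by
      rw [subst_app]
      exact congrArg _ (List.map_congr_left (fun u hu => subst_id u) |>.trans (List.map_id _))
decreasing_by
  have := List.sizeOf_lt_of_mem hu
  simp only [Tm.app.sizeOf_spec]
  omega

theorem iter_eq_subst (σ : V → Tm S V) (n : ℕ) (t : Tm S V) :
    iter σ n t = subst (fun y => iter σ n (Tm.var y)) t := by
  induction n with
  | zero => simp [iter, subst_id]
  | succ n ih =>
      have h1 : ∀ s : Tm S V, iter σ (n+1) s = subst σ (iter σ n s) := fun s => by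
        simp [iter, Function.iterate_succ_apply']
      rw [h1, ih, subst_subst]
      congr 1
      funext y
      rw [h1]

/-- `x` occurs in `t` at depth `d`. -/
inductive OccD (x : V) : Tm S V → ℕ → Prop
  | var : OccD x (Tm.var x) 0
  | app {f : S} {ts : List (Tm S V)} {t : Tm S V} {d : ℕ} :
      t ∈ ts → OccD x t d → OccD x (Tm.app f ts) (d + 1)

theorem occurs_occD {x : V} {t : Tm S V} (h : Occurs x t) : ∃ d, OccD x t d := by
  induction h with
  | var => exact ⟨0, .var⟩
  | app hmem _ ih => obtain ⟨d, hd⟩ := ih; exact ⟨d + 1, .app hmem hd⟩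

theorem occD_subst {x y : V} {t : Tm S V} {d e : ℕ} (σ : V → Tm S V)
    (h : OccD x t d) (he : OccD y (σ x) e) : OccD y (subst σ t) (d + e) := by
  induction h with
  | var => simpa [subst] using he
  | app hmem _ ih =>
      rw [subst_app, Nat.add_right_comm]
      exact OccD.app (List.mem_map_of_mem (f := subst σ) hmem) ih

theorem occD_lt_sizeOf {x : V} {t : Tm S V} {d : ℕ} (h : OccD x t d) : d < sizeOf t := by
  induction h with
  | var => simp
  | app hmem _ ih =>
      have := List.sizeOf_lt_of_mem hmem
      simp only [Tm.app.sizeOf_spec]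
      omega

theorem iter_app_ne_var (σ : V → Tm S V) (n : ℕ) (f : S) (ts : List (Tm S V)) (y : V) :
    iter σ n (Tm.app f ts) ≠ Tm.var y := by
  induction n generalizing f ts with
  | zero => simp [iter]
  | succ n ih =>
      rw [iter, Function.iterate_succ_apply, subst_app]
      exact ih _ _

end TmAux

namespace TmAux
open Tm
variable {S V : Type}

theorem occD_zero {x : V} {t : Tm S V} (h : OccD x t 0) : t = Tm.var x := by
  cases h; rfl

theorem occD_grow (σ : V → Tm S V) (x : V) (k e : ℕ)
    (he : OccD x (iter σ k (Tm.var x)) e) (he1 : 1 ≤ e) :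
    ∀ n, ∃ d, n ≤ d ∧ OccD x (iter σ (n * k) (Tm.var x)) d := by
  intro n
  induction n with
  | zero => exact ⟨0, le_refl _, by simpa [iter] using OccD.var⟩
  | succ n ih =>
      obtain ⟨d, hd, hocc⟩ := ih
      refine ⟨e + d, by omega, ?_⟩
      have key : iter σ ((n+1) * k) (Tm.var x)
          = subst (fun y => iter σ (n * k) (Tm.var y)) (iter σ k (Tm.var x)) := by
        rw [← iter_eq_subst]
        show (subst σ)^[(n+1)*k] (Tm.var x) = (subst σ)^[n*k] ((subst σ)^[k] (Tm.var x))
        rw [← Function.iterate_add_apply]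
        congr 1
        ring
      rw [key]
      exact occD_subst _ he hocc

end TmAux

/-- If `x` lies on a cycle of the variable transition graph of `σ`
(i.e. `x` occurs in `x σᵏ` for some `k > 0`) and `x σ` is not a variable,
then the terms `x, xσ, xσ², …` are pairwise distinct. -/
theorem cycle_var_iterates_pairwise_distinct {S V : Type} (σ : V → Tm S V) (x : V)
    (hcycle : ∃ k : ℕ, 0 < k ∧ Tm.Occurs x (Tm.iter σ k (Tm.var x)))
    (hnotvar : ∀ y : V, σ x ≠ Tm.var y) :
    ∀ m m' : ℕ, m ≠ m' → Tm.iter σ m (Tm.var x) ≠ Tm.iter σ m' (Tm.var x) := by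
  open TmAux in
  -- reduce to m < m'
  suffices H : ∀ m m' : ℕ, m < m' → Tm.iter σ m (Tm.var x) ≠ Tm.iter σ m' (Tm.var x) by
    intro m m' hne
    rcases lt_or_gt_of_ne hne with h | h
    · exact H m m' h
    · exact fun h2 => H m' m h h2.symm
  intro m m' hlt heq
  obtain ⟨k, hk, hocc⟩ := hcycle
  -- σ x is an application
  obtain ⟨f, ts, hσ⟩ : ∃ f ts, σ x = Tm.app f ts := by
    cases hσx : σ x with
    | var y => exact absurd hσx (hnotvar y)
    | app f ts => exact ⟨f, ts, rfl⟩
  -- iter σ k (var x) is not a variable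
  have hknv : ∀ y, Tm.iter σ k (Tm.var x) ≠ Tm.var y := by
    intro y
    have : Tm.iter σ k (Tm.var x) = Tm.iter σ (k-1) (Tm.app f ts) := by
      show (Tm.subst σ)^[k] (Tm.var x) = _
      rw [show k = (k-1) + 1 by omega, Function.iterate_add_apply]
      simp [Tm.iter, Tm.subst, hσ]
    rw [this]
    exact iter_app_ne_var σ _ f ts y
  obtain ⟨e, he⟩ := occurs_occD hocc
  have he1 : 1 ≤ e := by
    rcases Nat.eq_zero_or_pos e with h0 | h1
    · subst h0; exact absurd (occD_zero he) (hknv x)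
    · exact h1
  -- periodicity
  set p := m' - m with hp
  have hp0 : 0 < p := by omega
  have period : ∀ j, (Tm.subst σ)^[m + j * p] (Tm.var x) = (Tm.subst σ)^[m] (Tm.var x) := by
    intro j
    induction j with
    | zero => simp
    | succ j ih =>
        have : m + (j+1) * p = p + (m + j * p) := by ring
        rw [this, Function.iterate_add_apply, ih, ← Function.iterate_add_apply,
          show p + m = m' by omega]
        exact heq.symm
  have general : ∀ j, m ≤ j →
      (Tm.subst σ)^[j] (Tm.var x) = (Tm.subst σ)^[m + (j - m) % p] (Tm.var x) := by
    intro j hj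
    have h1 : p * ((j - m) / p) + (j - m) % p = j - m := Nat.div_add_mod (j - m) p
    have hdm : j = (j - m) % p + (m + ((j - m) / p) * p) := by
      rw [Nat.mul_comm] at h1; omega
    rw [show m + (j - m) % p = (j - m) % p + m by ring, Function.iterate_add_apply]
    conv_lhs => rw [hdm]
    rw [Function.iterate_add_apply, period]
  -- the size bound
  set C := (Finset.range p).sup (fun r => sizeOf (Tm.iter σ (m + r) (Tm.var x))) with hC
  set N := C + m + 1 with hN
  obtain ⟨d, hNd, hoccN⟩ := occD_grow σ x k e he he1 N
  have hNk : m ≤ N * k := le_trans (by omega) (Nat.le_mul_of_pos_right N hk)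
  have hrew : Tm.iter σ (N * k) (Tm.var x)
      = Tm.iter σ (m + (N * k - m) % p) (Tm.var x) := general _ hNk
  have hsz : d < sizeOf (Tm.iter σ (N * k) (Tm.var x)) := occD_lt_sizeOf hoccN
  rw [hrew] at hsz
  have hle : sizeOf (Tm.iter σ (m + (N * k - m) % p) (Tm.var x)) ≤ C :=
    Finset.le_sup (f := fun r => sizeOf (Tm.iter σ (m + r) (Tm.var x)))
      (Finset.mem_range.2 (Nat.mod_lt _ hp0))
  omega
end

section
/- Let t be a term and σ a substitution. Suppose some variable x reachable from a variable of t in the variable transition graph of σ lies on a cycle (x occurs in xσ^k for some k > 0) and xσ is not a variable. Then tσ^m ≠ tσ^{m'} whenever m ≠ m', i.e., ⟨t, σ⟩ is a pattern term. -/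
namespace PatternAux
open Tm
variable {S V : Type}

theorem subst_app (σ : V → Tm S V) (f : S) (ts : List (Tm S V)) :
    subst σ (app f ts) = app f (ts.map (subst σ)) := by
  rw [subst]
  congr 1
  simp

/-- Subterm relation. -/
inductive Sub : Tm S V → Tm S V → Prop
  | refl (t : Tm S V) : Sub t t
  | app {s u : Tm S V} {f : S} {ts : List (Tm S V)} :
      Sub s u → u ∈ ts → Sub s (app f ts)

theorem Sub.sizeOf_le {s t : Tm S V} (h : Sub s t) : sizeOf s ≤ sizeOf t := by
  induction h with
  | refl => exact le_rfl
  | app h hm ih =>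
      have := List.sizeOf_lt_of_mem hm
      simp only [Tm.app.sizeOf_spec]
      omega

theorem Sub.sizeOf_lt' {s u : Tm S V} {f : S} {ts : List (Tm S V)}
    (h : Sub s u) (hm : u ∈ ts) : sizeOf s < sizeOf (Tm.app f ts) := by
  have := List.sizeOf_lt_of_mem hm
  have := h.sizeOf_le
  simp only [Tm.app.sizeOf_spec]
  omega

theorem Sub.trans {s t r : Tm S V} (h1 : Sub s t) (h2 : Sub t r) : Sub s r := by
  induction h2 with
  | refl => exact h1
  | app h hm ih => exact Sub.app ih hm

theorem Sub.subst (σ : V → Tm S V) {s t : Tm S V} (h : Sub s t) :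
    Sub (subst σ s) (subst σ t) := by
  induction h with
  | refl => exact Sub.refl _
  | app h hm ih =>
      rw [subst_app]
      exact Sub.app ih (List.mem_map_of_mem hm)

theorem Sub.iter (σ : V → Tm S V) (n : ℕ) {s t : Tm S V} (h : Sub s t) :
    Sub (iter σ n s) (iter σ n t) := by
  induction n with
  | zero => exact h
  | succ n ih =>
      simpa [Tm.iter, Function.iterate_succ_apply'] using ih.subst σ

theorem occurs_sub {x : V} {t : Tm S V} (h : Occurs x t) : Sub (var x) t := by
  induction h with
  | var => exact Sub.refl _
  | app hm _ ih => exact Sub.app ih hm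

theorem iter_add (σ : V → Tm S V) (a b : ℕ) (t : Tm S V) :
    iter σ (a + b) t = iter σ a (iter σ b t) :=
  Function.iterate_add_apply _ _ _ _

theorem iter_app (σ : V → Tm S V) (n : ℕ) (f : S) (ts : List (Tm S V)) :
    ∃ ts' : List (Tm S V), iter σ n (app f ts) = app f ts' ∧
      ∀ u ∈ ts, iter σ n u ∈ ts' := by
  induction n with
  | zero => exact ⟨ts, rfl, fun u hu => hu⟩
  | succ n ih =>
      obtain ⟨ts', h1, h2⟩ := ih
      refine ⟨ts'.map (subst σ), ?_, ?_⟩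
      · rw [Tm.iter, Function.iterate_succ_apply', ← Tm.iter, h1, subst_app]
      · intro u hu
        rw [Tm.iter, Function.iterate_succ_apply', ← Tm.iter]
        exact List.mem_map_of_mem (h2 u hu)

end PatternAux

open PatternAux in
/-- If some variable `x`, reachable in the variable transition graph of `σ` from a
variable of `t` (i.e. `x` occurs in `y σʲ` for some variable `y` of `t` and some `j`),
lies on a cycle (`x` occurs in `x σᵏ` for some `k > 0`) and `x σ` is not a variable,
then `t σᵐ ≠ t σ^{m'}` whenever `m ≠ m'`, i.e. `⟨t, σ⟩` is a pattern term. -/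
theorem pattern_term_of_cycle {S V : Type} (t : Tm S V) (σ : V → Tm S V)
    (h : ∃ x : V,
      (∃ y : V, Tm.Occurs y t ∧ ∃ j : ℕ, Tm.Occurs x (Tm.iter σ j (Tm.var y))) ∧
      (∃ k : ℕ, 0 < k ∧ Tm.Occurs x (Tm.iter σ k (Tm.var x))) ∧
      (∀ y : V, σ x ≠ Tm.var y)) :
    ∀ m m' : ℕ, m ≠ m' → Tm.iter σ m t ≠ Tm.iter σ m' t := by
  obtain ⟨x, ⟨y, hyt, j, hxy⟩, ⟨k, hk, hxx⟩, hnv⟩ := h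
  obtain ⟨g, gs, hgx⟩ : ∃ g gs, σ x = Tm.app g gs := by
    cases hσx : σ x with
    | var z => exact absurd hσx (hnv z)
    | app g gs => exact ⟨g, gs, rfl⟩
  have hk1 : Tm.iter σ k (Tm.var x) = Tm.iter σ (k - 1) (Tm.app g gs) := by
    conv_lhs => rw [show k = (k - 1) + 1 by omega]
    rw [Tm.iter, Function.iterate_succ_apply, ← Tm.iter,
      show Tm.subst σ (Tm.var x) = σ x from by rw [Tm.subst], hgx]
  obtain ⟨ts, hts, -⟩ := iter_app σ (k - 1) g gs
  have hxts : Tm.Occurs x (Tm.app g ts) := by rw [← hts, ← hk1]; exact hxx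
  obtain ⟨u, hu, hxu⟩ : ∃ u ∈ ts, Tm.Occurs x u := by
    cases hxts with
    | app hm ho => exact ⟨_, hm, ho⟩
  have grow : ∀ n : ℕ, n ≤ sizeOf (Tm.iter σ (k * n) (Tm.var x)) := by
    intro n
    induction n with
    | zero => omega
    | succ n ih =>
        have step : sizeOf (Tm.iter σ (k * n) (Tm.var x)) <
            sizeOf (Tm.iter σ (k * (n + 1)) (Tm.var x)) := by
          have heq : Tm.iter σ (k * (n + 1)) (Tm.var x)
              = Tm.iter σ (k * n) (Tm.app g ts) := by
            rw [show k * (n + 1) = k * n + k by ring, iter_add, hk1, hts]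
          obtain ⟨ts', h1, h2⟩ := iter_app σ (k * n) g ts
          rw [heq, h1]
          have hsub : Sub (Tm.iter σ (k * n) (Tm.var x)) (Tm.iter σ (k * n) u) :=
            Sub.iter σ _ (occurs_sub hxu)
          exact hsub.sizeOf_lt' (h2 u hu)
        omega
  have hsubt : Sub (Tm.var x) (Tm.iter σ j t) :=
    (occurs_sub hxy).trans (Sub.iter σ j (occurs_sub hyt))
  have unbdd : ∀ n : ℕ, n ≤ sizeOf (Tm.iter σ (k * n + j) t) := by
    intro n
    rw [iter_add σ (k * n) j t]
    exact le_trans (grow n) (Sub.iter σ (k * n) hsubt).sizeOf_le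
  suffices H : ∀ m m' : ℕ, m < m' → Tm.iter σ m t ≠ Tm.iter σ m' t by
    intro m m' hne heq
    rcases lt_or_gt_of_ne hne with h | h
    · exact H m m' h heq
    · exact H m' m h heq.symm
  intro m m' hlt heq
  set p := m' - m with hp
  have hppos : 0 < p := by omega
  have hper : Tm.iter σ (m + p) t = Tm.iter σ m t := by
    rw [show m + p = m' by omega, ← heq]
  have hcyc : ∀ c : ℕ, Tm.iter σ (m + c * p) t = Tm.iter σ m t := by
    intro c
    induction c with
    | zero => simp
    | succ c ih =>
        rw [show m + (c + 1) * p = p + (m + c * p) by ring, iter_add, ih,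
          ← iter_add, Nat.add_comm, hper]
  have key : ∀ a q r : ℕ, a = r + (m + q * p) →
      Tm.iter σ a t = Tm.iter σ (m + r) t := by
    intro a q r ha
    subst ha
    rw [iter_add, hcyc, ← iter_add, Nat.add_comm]
  have hred : ∀ i : ℕ, m ≤ i →
      Tm.iter σ i t = Tm.iter σ (m + (i - m) % p) t := by
    intro i hi
    exact key i ((i - m) / p) ((i - m) % p)
      (by have := Nat.div_add_mod (i - m) p; rw [Nat.mul_comm]; omega)
  set B := Finset.sup (Finset.range p) (fun r => sizeOf (Tm.iter σ (m + r) t)) with hB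
  set n := B + m + j + 1 with hn
  have hge : m ≤ k * n + j := by nlinarith
  have h1 : n ≤ sizeOf (Tm.iter σ (k * n + j) t) := unbdd n
  have h2 : sizeOf (Tm.iter σ (k * n + j) t) ≤ B := by
    rw [hred _ hge]
    exact Finset.le_sup (f := fun r => sizeOf (Tm.iter σ (m + r) t))
      (Finset.mem_range.mpr (Nat.mod_lt _ hppos))
  omega
end

section
/- If for every variable x lying on a cycle of the variable transition graph of σ (restricted to variables reachable from variables of t) we have that xσ is a variable, then ⟨t, σ⟩ is not a pattern term: there exist m ≠ m' with tσ^m = tσ^{m'}. -/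
namespace Tm
variable {S V : Type}

theorem subst_var (σ : V → Tm S V) (x : V) : subst σ (var x) = σ x := by rw [subst]

theorem subst_app (σ : V → Tm S V) (f : S) (ts : List (Tm S V)) :
    subst σ (app f ts) = app f (ts.map (subst σ)) := by
  rw [subst, List.attach_map_val]

theorem occurs_var_iff {x y : V} : Occurs x (var y : Tm S V) ↔ x = y := by
  constructor
  · rintro ⟨⟩; rfl
  · rintro rfl; exact .var

theorem occurs_app_iff {x : V} {f : S} {ts : List (Tm S V)} :
    Occurs x (app f ts) ↔ ∃ u ∈ ts, Occurs x u := by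
  constructor
  · rintro ⟨hm, hu⟩; exact ⟨_, ‹_›, ‹_›⟩
  · rintro ⟨u, hm, hu⟩; exact .app hm hu

theorem subst_id : ∀ (u : Tm S V), subst (fun x => var x) u = u
  | var x => by rw [subst_var]
  | app f ts => by
    rw [subst_app]
    congr 1
    conv_rhs => rw [← List.map_id ts]
    exact List.map_congr_left fun u hu => by
      have := List.sizeOf_lt_of_mem hu
      exact subst_id u
decreasing_by
  simp only [Tm.app.sizeOf_spec]; omega

theorem subst_subst (σ τ : V → Tm S V) :
    ∀ (u : Tm S V), subst σ (subst τ u) = subst (fun x => subst σ (τ x)) u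
  | var x => by rw [subst_var, subst_var]
  | app f ts => by
    rw [subst_app, subst_app, subst_app, List.map_map]
    congr 1
    exact List.map_congr_left fun u hu => by
      have := List.sizeOf_lt_of_mem hu
      exact subst_subst σ τ u
decreasing_by
  simp only [Tm.app.sizeOf_spec]; omega

theorem subst_congr {σ τ : V → Tm S V} :
    ∀ (u : Tm S V), (∀ x, Occurs x u → σ x = τ x) → subst σ u = subst τ u
  | var x, h => by rw [subst_var, subst_var]; exact h x .var
  | app f ts, h => by
    rw [subst_app, subst_app]
    congr 1
    exact List.map_congr_left fun u hu => by
      have := List.sizeOf_lt_of_mem hu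
      exact subst_congr u (fun x hx => h x (.app hu hx))
decreasing_by
  simp only [Tm.app.sizeOf_spec]; omega

theorem occurs_subst {σ : V → Tm S V} {x : V} :
    ∀ {u : Tm S V}, Occurs x (subst σ u) ↔ ∃ y, Occurs y u ∧ Occurs x (σ y)
  | var z => by
    rw [subst_var]
    constructor
    · intro hx; exact ⟨z, .var, hx⟩
    · rintro ⟨y, hy, hx⟩; rw [occurs_var_iff] at hy; subst hy; exact hx
  | app f ts => by
    rw [subst_app, occurs_app_iff]
    constructor
    · rintro ⟨u, hu, hx⟩
      rw [List.mem_map] at hu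
      obtain ⟨w, hw, rfl⟩ := hu
      have := List.sizeOf_lt_of_mem hw
      obtain ⟨y, hy, hx⟩ := occurs_subst.mp hx
      exact ⟨y, .app hw hy, hx⟩
    · rintro ⟨y, hy, hx⟩
      rw [occurs_app_iff] at hy
      obtain ⟨w, hw, hy⟩ := hy
      have := List.sizeOf_lt_of_mem hw
      exact ⟨subst σ w, List.mem_map_of_mem hw, occurs_subst.mpr ⟨y, hy, hx⟩⟩
decreasing_by
  all_goals simp only [Tm.app.sizeOf_spec]; omega

theorem vars_finite : ∀ (u : Tm S V), {x | Occurs x u}.Finite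
  | var z => Set.Finite.subset (Set.finite_singleton z) (fun x hx => occurs_var_iff.mp hx)
  | app f ts => by
    have : {x | Occurs x (app f ts)} ⊆ ⋃ u ∈ {u | u ∈ ts}, {x | Occurs x u} := by
      intro x hx
      rw [Set.mem_setOf_eq, occurs_app_iff] at hx
      obtain ⟨u, hu, hx⟩ := hx
      exact Set.mem_biUnion hu hx
    refine Set.Finite.subset (Set.Finite.biUnion (List.finite_toSet ts) ?_) this
    intro u hu
    have := List.sizeOf_lt_of_mem hu
    exact vars_finite u
decreasing_by
  simp only [Tm.app.sizeOf_spec]; omega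

theorem iter_zero (σ : V → Tm S V) (u : Tm S V) : iter σ 0 u = u := rfl

theorem iter_succ (σ : V → Tm S V) (n : ℕ) (u : Tm S V) :
    iter σ (n + 1) u = subst σ (iter σ n u) := Function.iterate_succ_apply' _ _ _

theorem iter_succ' (σ : V → Tm S V) (n : ℕ) (u : Tm S V) :
    iter σ (n + 1) u = iter σ n (subst σ u) := Function.iterate_succ_apply _ _ _

theorem iter_add (σ : V → Tm S V) (m n : ℕ) (u : Tm S V) :
    iter σ (m + n) u = iter σ m (iter σ n u) := Function.iterate_add_apply _ _ _ _

theorem iter_eq_subst (σ : V → Tm S V) (n : ℕ) (u : Tm S V) :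
    iter σ n u = subst (fun x => iter σ n (var x)) u := by
  induction n generalizing u with
  | zero => simpa [iter_zero] using (subst_id u).symm
  | succ n ih =>
    rw [iter_succ, ih u, subst_subst]
    refine subst_congr u fun x _ => ?_
    rw [← iter_succ]

end Tm

namespace TmAux
variable {S V : Type}

/-- `z` is reachable from `y`. -/
def Rch (σ : V → Tm S V) (y z : V) : Prop := ∃ j, Tm.Occurs z (Tm.iter σ j (Tm.var y))

/-- `x` is reachable from some variable of `t`. -/
def Reach (t : Tm S V) (σ : V → Tm S V) (x : V) : Prop := ∃ y, Tm.Occurs y t ∧ Rch σ y x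

/-- `x` is reachable and lies on a cycle. -/
def Cyc (t : Tm S V) (σ : V → Tm S V) (x : V) : Prop :=
  Reach t σ x ∧ ∃ k, 0 < k ∧ Tm.Occurs x (Tm.iter σ k (Tm.var x))

/-- The successor variable of `x`, when `σ x` is a variable. -/
noncomputable def fnext (σ : V → Tm S V) (x : V) : V :=
  @Classical.epsilon V ⟨x⟩ (fun y => σ x = Tm.var y)

theorem fnext_spec (σ : V → Tm S V) (x : V) (hx : ∃ y, σ x = Tm.var y) :
    σ x = Tm.var (fnext σ x) :=
  @Classical.epsilon_spec V (fun y => σ x = Tm.var y) hx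

theorem rch_refl (σ : V → Tm S V) (x : V) : Rch σ x x := ⟨0, Tm.Occurs.var⟩

theorem rch_trans {σ : V → Tm S V} {y x z : V} (h1 : Rch σ y x) (h2 : Rch σ x z) :
    Rch σ y z := by
  obtain ⟨j, hj⟩ := h1
  obtain ⟨i, hi⟩ := h2
  refine ⟨i + j, ?_⟩
  rw [Tm.iter_add, Tm.iter_eq_subst σ i]
  exact Tm.occurs_subst.mpr ⟨x, hj, hi⟩

theorem rch_of_occurs {σ : V → Tm S V} {x z : V} (h : Tm.Occurs z (σ x)) : Rch σ x z :=
  ⟨1, by rwa [Tm.iter_succ, Tm.iter_zero, Tm.subst_var]⟩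

theorem reach_finite (t : Tm S V) (σ : V → Tm S V) (hfin : {x : V | σ x ≠ Tm.var x}.Finite) :
    {x | Reach t σ x}.Finite := by
  have aux : ∀ (j : ℕ) (y x : V), Tm.Occurs x (Tm.iter σ j (Tm.var y)) →
      x = y ∨ ∃ z, σ z ≠ Tm.var z ∧ Tm.Occurs x (σ z) := by
    intro j
    induction j with
    | zero => intro y x hx; left; exact Tm.occurs_var_iff.mp hx
    | succ j ih =>
      intro y x hx
      rw [Tm.iter_succ] at hx
      obtain ⟨z, hz, hxz⟩ := Tm.occurs_subst.mp hx
      by_cases hzz : σ z = Tm.var z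
      · rw [hzz] at hxz
        have := Tm.occurs_var_iff.mp hxz
        subst this
        exact ih y x hz
      · exact Or.inr ⟨z, hzz, hxz⟩
  have sub : {x | Reach t σ x} ⊆
      {x | Tm.Occurs x t} ∪ ⋃ z ∈ {z | σ z ≠ Tm.var z}, {x | Tm.Occurs x (σ z)} := by
    rintro x ⟨y, hy, j, hj⟩
    rcases aux j y x hj with rfl | ⟨z, hz1, hz2⟩
    · exact Or.inl hy
    · exact Or.inr (Set.mem_biUnion hz1 hz2)
  exact ((Tm.vars_finite t).union (hfin.biUnion fun z _ => Tm.vars_finite (σ z))).subset sub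

variable {t : Tm S V} {σ : V → Tm S V}

theorem cyc_fnext (h : ∀ x, Cyc t σ x → ∃ y, σ x = Tm.var y) {x : V} (hx : Cyc t σ x) :
    Cyc t σ (fnext σ x) := by
  have hv : σ x = Tm.var (fnext σ x) := fnext_spec σ x (h x hx)
  obtain ⟨⟨y, hyt, j, hj⟩, k, hk, hck⟩ := hx
  have hocc : Tm.Occurs (fnext σ x) (σ x) := by rw [hv]; exact .var
  constructor
  · refine ⟨y, hyt, j + 1, ?_⟩
    rw [Tm.iter_succ]
    exact Tm.occurs_subst.mpr ⟨x, hj, hocc⟩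
  · refine ⟨k, hk, ?_⟩
    have h1 : Tm.Occurs (fnext σ x) (Tm.iter σ (k + 1) (Tm.var x)) := by
      rw [Tm.iter_succ]
      exact Tm.occurs_subst.mpr ⟨x, hck, hocc⟩
    have h2 : Tm.iter σ (k + 1) (Tm.var x) = Tm.iter σ k (Tm.var (fnext σ x)) := by
      rw [Tm.iter_succ', Tm.subst_var, hv]
    rwa [h2] at h1

theorem cyc_fnext_iter (h : ∀ x, Cyc t σ x → ∃ y, σ x = Tm.var y) (m : ℕ) {x : V}
    (hx : Cyc t σ x) : Cyc t σ ((fnext σ)^[m] x) := by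
  induction m with
  | zero => exact hx
  | succ m ih => rw [Function.iterate_succ_apply']; exact cyc_fnext h ih

theorem cyc_subst (h : ∀ x, Cyc t σ x → ∃ y, σ x = Tm.var y) {s : Tm S V}
    (hs : ∀ z, Tm.Occurs z s → Cyc t σ z) :
    ∀ z, Tm.Occurs z (Tm.subst σ s) → Cyc t σ z := by
  intro z hz
  obtain ⟨y, hy, hzy⟩ := Tm.occurs_subst.mp hz
  have hcy := hs y hy
  have hv := fnext_spec σ y (h y hcy)
  rw [hv] at hzy
  have := Tm.occurs_var_iff.mp hzy
  subst this
  exact cyc_fnext h hcy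

theorem cyc_all_iter (h : ∀ x, Cyc t σ x → ∃ y, σ x = Tm.var y) {s : Tm S V}
    (hs : ∀ z, Tm.Occurs z s → Cyc t σ z) (m : ℕ) :
    ∀ z, Tm.Occurs z (Tm.iter σ m s) → Cyc t σ z := by
  induction m with
  | zero => exact hs
  | succ m ih =>
    intro z hz
    rw [Tm.iter_succ] at hz
    exact cyc_subst h ih z hz

theorem iter_eq_fnext_subst (h : ∀ x, Cyc t σ x → ∃ y, σ x = Tm.var y) {s : Tm S V}
    (hs : ∀ z, Tm.Occurs z s → Cyc t σ z) (m : ℕ) :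
    Tm.iter σ m s = Tm.subst (fun z => Tm.var ((fnext σ)^[m] z)) s := by
  induction m with
  | zero =>
    rw [Tm.iter_zero]
    simp only [Function.iterate_zero, id]
    exact (Tm.subst_id s).symm
  | succ m ih =>
    rw [Tm.iter_succ, ih, Tm.subst_subst]
    refine Tm.subst_congr s fun z hz => ?_
    rw [Tm.subst_var]
    have hc := cyc_fnext_iter h m (hs z hz)
    rw [fnext_spec σ _ (h _ hc)]
    exact congrArg Tm.var (Function.iterate_succ_apply' (fnext σ) m z).symm

theorem exists_bound (hfin : {x : V | σ x ≠ Tm.var x}.Finite)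
    (h : ∀ x, Cyc t σ x → ∃ y, σ x = Tm.var y) :
    ∀ x, Reach t σ x → ∃ n, ∀ z, Tm.Occurs z (Tm.iter σ n (Tm.var x)) → Cyc t σ z := by
  classical
  have RF := reach_finite t σ hfin
  suffices H : ∀ c x, Reach t σ x → ({z | Rch σ x z ∧ ¬ Cyc t σ z}).ncard ≤ c →
      ∃ n, ∀ z, Tm.Occurs z (Tm.iter σ n (Tm.var x)) → Cyc t σ z by
    exact fun x hx => H _ x hx le_rfl
  intro c
  induction c with
  | zero =>
    intro x hx hc
    by_cases hcx : Cyc t σ x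
    · exact ⟨0, fun z hz => by rw [Tm.iter_zero] at hz; rwa [Tm.occurs_var_iff.mp hz]⟩
    · exfalso
      have hxA : x ∈ {z | Rch σ x z ∧ ¬ Cyc t σ z} := ⟨rch_refl σ x, hcx⟩
      have hAfin : {z | Rch σ x z ∧ ¬ Cyc t σ z}.Finite :=
        RF.subset fun z hz => by
          obtain ⟨y, hyt, hr⟩ := hx
          exact ⟨y, hyt, rch_trans hr hz.1⟩
      have := Set.ncard_pos hAfin |>.mpr ⟨x, hxA⟩
      omega
  | succ c ih =>
    intro x hx hc
    by_cases hcx : Cyc t σ x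
    · exact ⟨0, fun z hz => by rw [Tm.iter_zero] at hz; rwa [Tm.occurs_var_iff.mp hz]⟩
    · have hxA : x ∈ {z | Rch σ x z ∧ ¬ Cyc t σ z} := ⟨rch_refl σ x, hcx⟩
      have hAfin : {z | Rch σ x z ∧ ¬ Cyc t σ z}.Finite :=
        RF.subset fun z hz => by
          obtain ⟨y, hyt, hr⟩ := hx
          exact ⟨y, hyt, rch_trans hr hz.1⟩
      -- for each variable z of σ x, the bad set shrinks
      have key : ∀ z, Tm.Occurs z (σ x) →
          ∃ n, ∀ w, Tm.Occurs w (Tm.iter σ n (Tm.var z)) → Cyc t σ w := by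
        intro z hz
        have hxz : Rch σ x z := rch_of_occurs hz
        have hRz : Reach t σ z := by
          obtain ⟨y, hyt, hr⟩ := hx
          exact ⟨y, hyt, rch_trans hr hxz⟩
        have hsub : {w | Rch σ z w ∧ ¬ Cyc t σ w} ⊆
            {w | Rch σ x w ∧ ¬ Cyc t σ w} \ {x} := by
          rintro w ⟨hrw, hcw⟩
          refine ⟨⟨rch_trans hxz hrw, hcw⟩, ?_⟩
          simp only [Set.mem_singleton_iff]
          intro hwx
          apply hcx
          refine ⟨hx, ?_⟩
          obtain ⟨i, hi⟩ := hrw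
          rw [hwx] at hi
          refine ⟨i + 1, Nat.succ_pos i, ?_⟩
          have : Tm.iter σ (i + 1) (Tm.var x) = Tm.iter σ i (σ x) := by
            rw [Tm.iter_succ', Tm.subst_var]
          rw [this, Tm.iter_eq_subst]
          exact Tm.occurs_subst.mpr ⟨z, hz, hi⟩
        have hlt : ({w | Rch σ z w ∧ ¬ Cyc t σ w}).ncard ≤ c := by
          have h1 : ({w | Rch σ x w ∧ ¬ Cyc t σ w} \ {x}).ncard <
              ({w | Rch σ x w ∧ ¬ Cyc t σ w}).ncard :=
            Set.ncard_diff_singleton_lt_of_mem hxA hAfin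
          have h2 := Set.ncard_le_ncard hsub (hAfin.subset Set.diff_subset)
          omega
        exact ih z hRz hlt
      choose! g hg using key
      have hvfin := Tm.vars_finite (σ x)
      obtain ⟨N, hN⟩ := (hvfin.image g).bddAbove
      refine ⟨N + 1, ?_⟩
      intro w hw
      rw [Tm.iter_succ', Tm.subst_var, Tm.iter_eq_subst] at hw
      obtain ⟨z, hz, hwz⟩ := Tm.occurs_subst.mp hw
      have hgz : g z ≤ N := hN (Set.mem_image_of_mem g hz)
      have hsplit : Tm.iter σ N (Tm.var z) =
          Tm.iter σ (N - g z) (Tm.iter σ (g z) (Tm.var z)) := by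
        rw [← Tm.iter_add]
        congr 1
        omega
      rw [hsplit] at hwz
      exact cyc_all_iter h (hg z hz) (N - g z) w hwz

end TmAux

/-- If every variable `x` lying on a cycle of the variable transition graph of `σ`
restricted to the variables reachable from variables of `t` satisfies that `x σ` is a
variable, then `⟨t, σ⟩` is not a pattern term: some iterates coincide. -/
theorem not_pattern_term_of_all_cycle_vars_map_to_vars {S V : Type}
    (t : Tm S V) (σ : V → Tm S V)
    (hfin : {x : V | σ x ≠ Tm.var x}.Finite)
    (h : ∀ x : V,
      (∃ y : V, Tm.Occurs y t ∧ ∃ j : ℕ, Tm.Occurs x (Tm.iter σ j (Tm.var y))) →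
      (∃ k : ℕ, 0 < k ∧ Tm.Occurs x (Tm.iter σ k (Tm.var x))) →
      ∃ y : V, σ x = Tm.var y) :
    ∃ m m' : ℕ, m ≠ m' ∧ Tm.iter σ m t = Tm.iter σ m' t := by
  classical
  have h' : ∀ x, TmAux.Cyc t σ x → ∃ y, σ x = Tm.var y := fun x hx => h x hx.1 hx.2
  -- a stage N after which all variables are cyclic
  have hbound := TmAux.exists_bound (t := t) hfin h'
  have hvt := Tm.vars_finite t
  have key : ∀ y ∈ {y | Tm.Occurs y t},
      ∃ n, ∀ z, Tm.Occurs z (Tm.iter σ n (Tm.var y)) → TmAux.Cyc t σ z := by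
    intro y hy
    exact hbound y ⟨y, hy, TmAux.rch_refl σ y⟩
  choose! g hg using key
  obtain ⟨N, hN⟩ := (hvt.image g).bddAbove
  have hNt : ∀ z, Tm.Occurs z (Tm.iter σ N t) → TmAux.Cyc t σ z := by
    intro z hz
    rw [Tm.iter_eq_subst] at hz
    obtain ⟨y, hy, hzy⟩ := Tm.occurs_subst.mp hz
    have hgy : g y ≤ N := hN (Set.mem_image_of_mem g hy)
    have hsplit : Tm.iter σ N (Tm.var y) =
        Tm.iter σ (N - g y) (Tm.iter σ (g y) (Tm.var y)) := by
      rw [← Tm.iter_add]; congr 1; omega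
    rw [hsplit] at hzy
    exact TmAux.cyc_all_iter h' (hg y hy) (N - g y) z hzy
  -- pigeonhole on iterates of fnext restricted to the cyclic variables
  have hCfin : {x | TmAux.Cyc t σ x}.Finite :=
    (TmAux.reach_finite t σ hfin).subset fun x hx => hx.1
  haveI : Finite ↥{x | TmAux.Cyc t σ x} := hCfin
  let F : ↥{x | TmAux.Cyc t σ x} → ↥{x | TmAux.Cyc t σ x} :=
    fun p => ⟨TmAux.fnext σ p.1, TmAux.cyc_fnext h' p.2⟩
  have hFi : ∀ m (p : ↥{x | TmAux.Cyc t σ x}), (F^[m] p).1 = (TmAux.fnext σ)^[m] p.1 := by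
    intro m
    induction m with
    | zero => intro p; rfl
    | succ m ih =>
      intro p
      rw [Function.iterate_succ_apply, Function.iterate_succ_apply, ih]
  obtain ⟨m, m', hmm, heq⟩ :=
    Finite.exists_ne_map_eq_of_infinite (fun m : ℕ => F^[m])
  refine ⟨m + N, m' + N, by omega, ?_⟩
  rw [Tm.iter_add, Tm.iter_add,
    TmAux.iter_eq_fnext_subst h' hNt m, TmAux.iter_eq_fnext_subst h' hNt m']
  refine Tm.subst_congr _ fun z hz => ?_
  have hzC : TmAux.Cyc t σ z := hNt z hz
  have hzz := congrArg Subtype.val (congrFun heq ⟨z, hzC⟩)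
  rw [hFi, hFi] at hzz
  rw [hzz]
end

section
/- Let μ : ℤ → ℝ≥0 be a probability mass function with finite support defining a random walk on ℤ that is absorbed at values ≤ 0, and suppose μ(0) < 1. If the expected increment E(μ) = Σ_x x·μ(x) is strictly positive, then starting from any x₀ ≥ 1 the probability that the walk ever reaches a value ≤ 0 is strictly less than 1. -/
open Filter Topology

/-- `probWithin μ Sup n y` is the probability that the random walk with step
distribution `μ` (with support contained in the finite set `Sup`), started at `y`
and absorbed at values `≤ 0`, reaches a value `≤ 0` within `n` steps. -/
noncomputable def probWithin (μ : ℤ → ℝ) (Sup : Finset ℤ) : ℕ → ℤ → ℝ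
  | 0, y => if y ≤ 0 then 1 else 0
  | n + 1, y => if y ≤ 0 then 1 else ∑ x ∈ Sup, μ x * probWithin μ Sup n (y + x)

/-- The probability that the random walk started at `x₀` ever reaches a value `≤ 0`. -/
noncomputable def termProb (μ : ℤ → ℝ) (Sup : Finset ℤ) (x₀ : ℤ) : ℝ :=
  ⨆ n : ℕ, probWithin μ Sup n x₀

/-- Existence of `θ ∈ (0,1)` with `∑ μ x θ^x ≤ 1`, from positive drift. -/
lemma exists_theta (μ : ℤ → ℝ) (Sup : Finset ℤ)
    (hsum : ∑ x ∈ Sup, μ x = 1)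
    (hE : 0 < ∑ x ∈ Sup, (x : ℝ) * μ x) :
    ∃ θ : ℝ, 0 < θ ∧ θ < 1 ∧ ∑ x ∈ Sup, μ x * θ ^ x ≤ 1 := by
  set f : ℝ → ℝ := fun t => ∑ x ∈ Sup, μ x * t ^ x with hf
  have hf1 : f 1 = 1 := by simp [hf, hsum]
  have hderiv : HasDerivAt f (∑ x ∈ Sup, (x : ℝ) * μ x) 1 := by
    have : HasDerivAt f (∑ x ∈ Sup, μ x * ((x : ℝ) * (1:ℝ) ^ (x - 1))) 1 := by
      apply HasDerivAt.fun_sum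
      intro x _
      exact (hasDerivAt_zpow x (1:ℝ) (Or.inl one_ne_zero)).const_mul (μ x)
    simpa [mul_comm] using this
  have hslope : Tendsto (slope f 1) (𝓝[<] (1:ℝ)) (𝓝 (∑ x ∈ Sup, (x : ℝ) * μ x)) :=
    (hasDerivAt_iff_tendsto_slope.mp hderiv).mono_left
      (nhdsWithin_mono 1 (fun t ht => ne_of_lt ht))
  have h1 : ∀ᶠ t in 𝓝[<] (1:ℝ), 0 < slope f 1 t :=
    hslope.eventually (eventually_gt_nhds hE)
  have h2 : ∀ᶠ t in 𝓝[<] (1:ℝ), t ∈ Set.Ioo (0:ℝ) 1 := by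
    have : Set.Ioo (0:ℝ) 1 ∈ 𝓝[<] (1:ℝ) := Ioo_mem_nhdsLT_of_mem (by norm_num)
    exact this
  obtain ⟨θ, hθs, hθ01, hθ11⟩ := (h1.and h2).exists
  refine ⟨θ, hθ01, hθ11, ?_⟩
  have hne : θ - 1 < 0 := by linarith
  have : slope f 1 θ = (f θ - 1) / (θ - 1) := by
    simp [slope, hf1, div_eq_inv_mul]
  rw [this] at hθs
  have := div_pos_iff.mp hθs
  rcases this with ⟨h, h'⟩ | ⟨h, h'⟩
  · linarith
  · linarith

lemma probWithin_le (μ : ℤ → ℝ) (Sup : Finset ℤ)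
    (hnn : ∀ x : ℤ, 0 ≤ μ x) (hsum : ∑ x ∈ Sup, μ x = 1)
    {θ : ℝ} (hθ0 : 0 < θ) (hθ1 : θ < 1) (hθ : ∑ x ∈ Sup, μ x * θ ^ x ≤ 1) :
    ∀ n (y : ℤ), probWithin μ Sup n y ≤ min 1 (θ ^ y) := by
  have hzpos : ∀ z : ℤ, 0 < θ ^ z := fun z => zpow_pos hθ0 z
  have hone_le : ∀ z : ℤ, z ≤ 0 → 1 ≤ θ ^ z := by
    intro z hz
    have := (zpow_right_strictAnti₀ hθ0 hθ1).antitone hz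
    simpa using this
  intro n
  induction n with
  | zero =>
    intro y
    by_cases hy : y ≤ 0
    · simp [probWithin, hy, le_min_iff, hone_le y hy]
    · simp [probWithin, hy, le_min_iff, le_of_lt (hzpos y)]
  | succ n ih =>
    intro y
    by_cases hy : y ≤ 0
    · simp [probWithin, hy, le_min_iff, hone_le y hy]
    · have key : ∑ x ∈ Sup, μ x * probWithin μ Sup n (y + x) ≤ min 1 (θ ^ y) := by
        refine le_min ?_ ?_
        · calc ∑ x ∈ Sup, μ x * probWithin μ Sup n (y + x)
              ≤ ∑ x ∈ Sup, μ x * 1 := by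
                refine Finset.sum_le_sum fun x _ => ?_
                exact mul_le_mul_of_nonneg_left
                  ((ih (y + x)).trans (min_le_left _ _)) (hnn x)
            _ = 1 := by simp [hsum]
        · calc ∑ x ∈ Sup, μ x * probWithin μ Sup n (y + x)
              ≤ ∑ x ∈ Sup, μ x * (θ ^ y * θ ^ x) := by
                refine Finset.sum_le_sum fun x _ => ?_
                refine mul_le_mul_of_nonneg_left ?_ (hnn x)
                calc probWithin μ Sup n (y + x) ≤ min 1 (θ ^ (y + x)) := ih (y + x)
                  _ ≤ θ ^ (y + x) := min_le_right _ _
                  _ = θ ^ y * θ ^ x := zpow_add₀ (ne_of_gt hθ0) y x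
            _ = θ ^ y * ∑ x ∈ Sup, μ x * θ ^ x := by
                rw [Finset.mul_sum]; congr 1; ext x; ring
            _ ≤ θ ^ y * 1 := mul_le_mul_of_nonneg_left hθ (le_of_lt (hzpos y))
            _ = θ ^ y := mul_one _
      simpa [probWithin, hy] using key

/-- If `μ 0 < 1` and the expected increment is strictly positive, then from any
start `x₀ ≥ 1` the probability that the walk ever reaches a value `≤ 0` is `< 1`. -/
theorem termProb_lt_one_of_pos_drift (μ : ℤ → ℝ) (Sup : Finset ℤ)
    (hnn : ∀ x : ℤ, 0 ≤ μ x) (hsupp : ∀ x ∉ Sup, μ x = 0)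
    (hsum : ∑ x ∈ Sup, μ x = 1) (h0 : μ 0 < 1)
    (hE : 0 < ∑ x ∈ Sup, (x : ℝ) * μ x) :
    ∀ x₀ : ℤ, 1 ≤ x₀ → termProb μ Sup x₀ < 1 := by
  obtain ⟨θ, hθ0, hθ1, hθ⟩ := exists_theta μ Sup hsum hE
  intro x₀ hx₀
  have hle : termProb μ Sup x₀ ≤ θ ^ x₀ := by
    refine ciSup_le fun n => ?_
    exact (probWithin_le μ Sup hnn hsum hθ0 hθ1 hθ n x₀).trans (min_le_right _ _)
  have h2 : θ ^ x₀ ≤ θ ^ (1 : ℤ) := (zpow_right_strictAnti₀ hθ0 hθ1).antitone hx₀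
  have h3 : θ ^ (1 : ℤ) = θ := zpow_one θ
  calc termProb μ Sup x₀ ≤ θ ^ x₀ := hle
    _ ≤ θ ^ (1 : ℤ) := h2
    _ = θ := h3
    _ < 1 := hθ1
end

section
/- Let μ : ℤ → ℝ≥0 be a probability mass function with finite support defining a random walk on ℤ absorbed at values ≤ 0, with μ(0) < 1 and expected increment Σ_x x·μ(x) = 0. Then starting from any x₀ the walk reaches a value ≤ 0 with probability 1, but the expected number of steps until absorption is infinite for x₀ ≥ 1. -/
namespace SymWalkAux

open Finset

variable (μ : ℤ → ℝ) (Sup : Finset ℤ) (N : ℤ)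

/-- probability of exiting `(0,N)` on the low side within `n` steps -/
noncomputable def low : ℕ → ℤ → ℝ
  | 0, y => if y ≤ 0 then 1 else 0
  | n + 1, y => if y ≤ 0 then 1 else if N ≤ y then 0 else ∑ x ∈ Sup, μ x * low n (y + x)

/-- probability of exiting `(0,N)` on the high side within `n` steps -/
noncomputable def hi : ℕ → ℤ → ℝ
  | 0, y => if y ≤ 0 then 0 else if N ≤ y then 1 else 0
  | n + 1, y => if y ≤ 0 then 0 else if N ≤ y then 1 else ∑ x ∈ Sup, μ x * hi n (y + x)

/-- probability of staying inside `(0,N)` for `n` steps -/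
noncomputable def ins : ℕ → ℤ → ℝ
  | 0, y => if y ≤ 0 then 0 else if N ≤ y then 0 else 1
  | n + 1, y => if y ≤ 0 then 0 else if N ≤ y then 0 else ∑ x ∈ Sup, μ x * ins n (y + x)

variable {μ Sup N}

lemma probWithin_nonneg (hnn : ∀ x : ℤ, 0 ≤ μ x) (n : ℕ) (y : ℤ) :
    0 ≤ probWithin μ Sup n y := by
  induction n generalizing y with
  | zero => simp only [probWithin]; split <;> norm_num
  | succ n ih =>
    simp only [probWithin]; split
    · norm_num
    · exact Finset.sum_nonneg fun x _ => mul_nonneg (hnn x) (ih _)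

lemma probWithin_le_one (hnn : ∀ x : ℤ, 0 ≤ μ x) (hsum : ∑ x ∈ Sup, μ x = 1)
    (n : ℕ) (y : ℤ) : probWithin μ Sup n y ≤ 1 := by
  induction n generalizing y with
  | zero => simp only [probWithin]; split <;> norm_num
  | succ n ih =>
    simp only [probWithin]; split
    · exact le_rfl
    · calc ∑ x ∈ Sup, μ x * probWithin μ Sup n (y + x)
          ≤ ∑ x ∈ Sup, μ x * 1 :=
            Finset.sum_le_sum fun x _ => mul_le_mul_of_nonneg_left (ih _) (hnn x)
        _ = 1 := by simp [hsum]

lemma probWithin_succ_le (hnn : ∀ x : ℤ, 0 ≤ μ x) (n : ℕ) (y : ℤ) :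
    probWithin μ Sup n y ≤ probWithin μ Sup (n + 1) y := by
  induction n generalizing y with
  | zero =>
    simp only [probWithin]; split
    · exact le_rfl
    · exact Finset.sum_nonneg fun x _ => mul_nonneg (hnn x) (by split <;> norm_num)
  | succ n ih =>
    simp only [probWithin]; split
    · exact le_rfl
    · exact Finset.sum_le_sum fun x _ => mul_le_mul_of_nonneg_left (ih _) (hnn x)

lemma probWithin_mono (hnn : ∀ x : ℤ, 0 ≤ μ x) {n m : ℕ} (h : n ≤ m) (y : ℤ) :
    probWithin μ Sup n y ≤ probWithin μ Sup m y :=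
  monotone_nat_of_le_succ (fun k => probWithin_succ_le hnn k y) h

lemma probWithin_of_nonpos {y : ℤ} (hy : y ≤ 0) (n : ℕ) : probWithin μ Sup n y = 1 := by
  cases n <;> simp [probWithin, hy]

lemma low_nonneg (hnn : ∀ x : ℤ, 0 ≤ μ x) (n : ℕ) (y : ℤ) : 0 ≤ low μ Sup N n y := by
  induction n generalizing y with
  | zero => simp only [low]; split <;> norm_num
  | succ n ih =>
    simp only [low]; split_ifs
    · norm_num
    · exact le_rfl
    · exact Finset.sum_nonneg fun x _ => mul_nonneg (hnn x) (ih _)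

lemma hi_nonneg (hnn : ∀ x : ℤ, 0 ≤ μ x) (n : ℕ) (y : ℤ) : 0 ≤ hi μ Sup N n y := by
  induction n generalizing y with
  | zero => simp only [hi]; split_ifs <;> norm_num
  | succ n ih =>
    simp only [hi]; split_ifs
    · exact le_rfl
    · norm_num
    · exact Finset.sum_nonneg fun x _ => mul_nonneg (hnn x) (ih _)

lemma ins_nonneg (hnn : ∀ x : ℤ, 0 ≤ μ x) (n : ℕ) (y : ℤ) : 0 ≤ ins μ Sup N n y := by
  induction n generalizing y with
  | zero => simp only [ins]; split_ifs <;> norm_num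
  | succ n ih =>
    simp only [ins]; split_ifs
    · exact le_rfl
    · exact le_rfl
    · exact Finset.sum_nonneg fun x _ => mul_nonneg (hnn x) (ih _)

lemma ins_le_one (hnn : ∀ x : ℤ, 0 ≤ μ x) (hsum : ∑ x ∈ Sup, μ x = 1)
    (n : ℕ) (y : ℤ) : ins μ Sup N n y ≤ 1 := by
  induction n generalizing y with
  | zero => simp only [ins]; split_ifs <;> norm_num
  | succ n ih =>
    simp only [ins]; split_ifs
    · norm_num
    · norm_num
    · calc ∑ x ∈ Sup, μ x * ins μ Sup N n (y + x)
          ≤ ∑ x ∈ Sup, μ x * 1 :=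
            Finset.sum_le_sum fun x _ => mul_le_mul_of_nonneg_left (ih _) (hnn x)
        _ = 1 := by simp [hsum]

lemma lhi_sum (hsum : ∑ x ∈ Sup, μ x = 1) (n : ℕ) (y : ℤ) :
    low μ Sup N n y + hi μ Sup N n y + ins μ Sup N n y = 1 := by
  induction n generalizing y with
  | zero => simp only [low, hi, ins]; split_ifs <;> norm_num
  | succ n ih =>
    simp only [low, hi, ins]; split_ifs
    · norm_num
    · norm_num
    · have h : ∀ x ∈ Sup,
          μ x * low μ Sup N n (y + x) + μ x * hi μ Sup N n (y + x)
            + μ x * ins μ Sup N n (y + x) = μ x := by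
        intro x _
        rw [← mul_add, ← mul_add, ih, mul_one]
      rw [← Finset.sum_add_distrib, ← Finset.sum_add_distrib,
        Finset.sum_congr rfl h, hsum]

lemma low_le_probWithin (hnn : ∀ x : ℤ, 0 ≤ μ x) (n : ℕ) (y : ℤ) :
    low μ Sup N n y ≤ probWithin μ Sup n y := by
  induction n generalizing y with
  | zero => simp only [low, probWithin]; exact le_rfl
  | succ n ih =>
    simp only [low, probWithin]; split_ifs
    · exact le_rfl
    · exact Finset.sum_nonneg fun x _ => mul_nonneg (hnn x) (probWithin_nonneg hnn _ _)
    · exact Finset.sum_le_sum fun x _ => mul_le_mul_of_nonneg_left (ih _) (hnn x)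

lemma mean_id (hsum : ∑ x ∈ Sup, μ x = 1) (hE : ∑ x ∈ Sup, (x : ℝ) * μ x = 0)
    (y : ℤ) : ∑ x ∈ Sup, μ x * ((y : ℝ) + (x : ℝ)) = (y : ℝ) := by
  have h : ∀ x ∈ Sup, μ x * ((y : ℝ) + (x : ℝ)) = μ x * (y : ℝ) + (x : ℝ) * μ x :=
    fun x _ => by ring
  rw [Finset.sum_congr rfl h, Finset.sum_add_distrib, ← Finset.sum_mul, hsum, hE]
  ring

lemma hi_bound (hnn : ∀ x : ℤ, 0 ≤ μ x) (hsum : ∑ x ∈ Sup, μ x = 1)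
    (hE : ∑ x ∈ Sup, (x : ℝ) * μ x = 0) {M : ℤ}
    (hM : ∀ x ∈ Sup, -M ≤ x ∧ x ≤ M) (hM0 : 0 ≤ M) (n : ℕ) :
    ∀ y : ℤ, -M ≤ y →
      (N : ℝ) * hi μ Sup N n y ≤ (y : ℝ) + (M : ℝ) * low μ Sup N n y := by
  induction n with
  | zero =>
    intro y hy
    have hy' : -(M : ℝ) ≤ (y : ℝ) := by exact_mod_cast hy
    simp only [low, hi]; split_ifs with h1 h2
    · push_cast; linarith
    · have : (N : ℝ) ≤ (y : ℝ) := by exact_mod_cast h2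
      push_cast; linarith
    · have : (0 : ℝ) < (y : ℝ) := by exact_mod_cast (by omega : (0:ℤ) < y)
      push_cast; linarith
  | succ n ih =>
    intro y hy
    have hy' : -(M : ℝ) ≤ (y : ℝ) := by exact_mod_cast hy
    simp only [low, hi]; split_ifs with h1 h2
    · push_cast; linarith
    · have : (N : ℝ) ≤ (y : ℝ) := by exact_mod_cast h2
      push_cast; linarith
    · have key : ∀ x ∈ Sup,
          μ x * ((N : ℝ) * hi μ Sup N n (y + x))
            ≤ μ x * (((y : ℝ) + (x : ℝ)) + (M : ℝ) * low μ Sup N n (y + x)) := by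
        intro x hx
        have h1x : -M ≤ y + x := by have := (hM x hx).1; omega
        have := ih (y + x) h1x
        push_cast at this
        exact mul_le_mul_of_nonneg_left (by linarith) (hnn x)
      calc (N : ℝ) * ∑ x ∈ Sup, μ x * hi μ Sup N n (y + x)
          = ∑ x ∈ Sup, μ x * ((N : ℝ) * hi μ Sup N n (y + x)) := by
            rw [Finset.mul_sum]; exact Finset.sum_congr rfl fun x _ => by ring
        _ ≤ ∑ x ∈ Sup, μ x * (((y : ℝ) + (x : ℝ)) + (M : ℝ) * low μ Sup N n (y + x)) :=
            Finset.sum_le_sum key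
        _ = ∑ x ∈ Sup, μ x * ((y : ℝ) + (x : ℝ))
              + (M : ℝ) * ∑ x ∈ Sup, μ x * low μ Sup N n (y + x) := by
            rw [Finset.mul_sum, ← Finset.sum_add_distrib]
            exact Finset.sum_congr rfl fun x _ => by ring
        _ = (y : ℝ) + (M : ℝ) * ∑ x ∈ Sup, μ x * low μ Sup N n (y + x) := by
            rw [mean_id hsum hE]

lemma ins_outside {y : ℤ} (h : y ≤ 0 ∨ N ≤ y) (n : ℕ) : ins μ Sup N n y = 0 := by
  cases n with
  | zero =>
    simp only [ins]; split_ifs with h1 h2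
    · rfl
    · rfl
    · exact absurd h (by omega)
  | succ n =>
    simp only [ins]; split_ifs with h1 h2
    · rfl
    · rfl
    · exact absurd h (by omega)

lemma ins_succ_le (hnn : ∀ x : ℤ, 0 ≤ μ x) (hsum : ∑ x ∈ Sup, μ x = 1)
    (n : ℕ) (y : ℤ) : ins μ Sup N (n + 1) y ≤ ins μ Sup N n y := by
  induction n generalizing y with
  | zero =>
    by_cases h : y ≤ 0 ∨ N ≤ y
    · rw [ins_outside h, ins_outside h]
    · push_neg at h
      have h1 : ins μ Sup N 0 y = 1 := by
        simp only [ins]; rw [if_neg (by omega), if_neg (by omega)]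
      rw [h1]; exact ins_le_one hnn hsum 1 y
  | succ n ih =>
    simp only [ins]; split_ifs
    · exact le_rfl
    · exact le_rfl
    · exact Finset.sum_le_sum fun x _ => mul_le_mul_of_nonneg_left (ih _) (hnn x)

lemma ins_anti (hnn : ∀ x : ℤ, 0 ≤ μ x) (hsum : ∑ x ∈ Sup, μ x = 1)
    {n m : ℕ} (h : n ≤ m) (y : ℤ) : ins μ Sup N m y ≤ ins μ Sup N n y :=
  antitone_nat_of_succ_le (f := fun k => ins μ Sup N k y)
    (fun k => ins_succ_le hnn hsum k y) h

lemma ins_exit (hnn : ∀ x : ℤ, 0 ≤ μ x) (hsum : ∑ x ∈ Sup, μ x = 1)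
    {s : ℤ} (hs : s ∈ Sup) (hs0 : 0 < μ s) (k : ℕ) :
    ∀ (n : ℕ) (c : ℝ) (y : ℤ), 0 ≤ c → (∀ z : ℤ, ins μ Sup N n z ≤ c) →
      (y + (k : ℤ) * s ≤ 0 ∨ N ≤ y + (k : ℤ) * s) →
      ins μ Sup N (k + n) y ≤ (1 - μ s ^ k) * c := by
  have hδ1 : μ s ≤ 1 := by
    calc μ s ≤ ∑ x ∈ Sup, μ x := Finset.single_le_sum (fun x _ => hnn x) hs
      _ = 1 := hsum
  induction k with
  | zero =>
    intro n c y hc hb hout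
    simp only [Nat.cast_zero, zero_mul, add_zero] at hout
    rw [zero_add, ins_outside hout]
    norm_num
  | succ k ih =>
    intro n c y hc hb hout
    have hpow : μ s ^ (k + 1) ≤ 1 := pow_le_one₀ (le_of_lt hs0) hδ1
    by_cases hy : y ≤ 0 ∨ N ≤ y
    · rw [ins_outside hy]
      nlinarith
    · push_neg at hy
      have hrec : ins μ Sup N (k + 1 + n) y = ∑ x ∈ Sup, μ x * ins μ Sup N (k + n) (y + x) := by
        have hkn : k + 1 + n = (k + n) + 1 := by omega
        rw [hkn]; simp only [ins]; rw [if_neg (by omega), if_neg (by omega)]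
      have hcast : y + ((k + 1 : ℕ) : ℤ) * s = (y + s) + (k : ℤ) * s := by push_cast; ring
      rw [hcast] at hout
      have h1 : μ s * ins μ Sup N (k + n) (y + s) ≤ μ s * ((1 - μ s ^ k) * c) :=
        mul_le_mul_of_nonneg_left (ih n c (y + s) hc hb hout) (le_of_lt hs0)
      have h2 : ∑ x ∈ Sup.erase s, μ x * ins μ Sup N (k + n) (y + x)
          ≤ ∑ x ∈ Sup.erase s, μ x * c :=
        Finset.sum_le_sum fun x _ => mul_le_mul_of_nonneg_left
          (le_trans (ins_anti hnn hsum (Nat.le_add_left n k) _) (hb _)) (hnn x)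
      have h3 : ∑ x ∈ Sup.erase s, μ x * c = (1 - μ s) * c := by
        rw [← Finset.sum_mul]
        have := Finset.add_sum_erase Sup μ hs
        have h4 : ∑ x ∈ Sup.erase s, μ x = 1 - μ s := by rw [← hsum]; linarith
        rw [h4]
      calc ins μ Sup N (k + 1 + n) y
          = μ s * ins μ Sup N (k + n) (y + s)
            + ∑ x ∈ Sup.erase s, μ x * ins μ Sup N (k + n) (y + x) := by
            rw [hrec, ← Finset.add_sum_erase Sup _ hs]
        _ ≤ μ s * ((1 - μ s ^ k) * c) + (1 - μ s) * c := by
            rw [← h3] at *; exact add_le_add h1 h2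
        _ = (1 - μ s ^ (k + 1)) * c := by ring

lemma ins_geom (hnn : ∀ x : ℤ, 0 ≤ μ x) (hsum : ∑ x ∈ Sup, μ x = 1)
    {s : ℤ} (hs : s ∈ Sup) (hs0 : 0 < μ s) (K : ℕ)
    (hK : ∀ y : ℤ, 0 < y → y < N → (y + (K : ℤ) * s ≤ 0 ∨ N ≤ y + (K : ℤ) * s))
    (m : ℕ) (y : ℤ) : ins μ Sup N (m * K) y ≤ (1 - μ s ^ K) ^ m := by
  have hδ1 : μ s ≤ 1 := by
    calc μ s ≤ ∑ x ∈ Sup, μ x := Finset.single_le_sum (fun x _ => hnn x) hs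
      _ = 1 := hsum
  have hbase : 0 ≤ 1 - μ s ^ K := by
    have := pow_le_one₀ (le_of_lt hs0) hδ1 (n := K); linarith
  induction m generalizing y with
  | zero => simpa using ins_le_one hnn hsum 0 y
  | succ m ih =>
    by_cases hy : y ≤ 0 ∨ N ≤ y
    · rw [ins_outside hy]; positivity
    · push_neg at hy
      have hmk : (m + 1) * K = K + m * K := by ring
      rw [hmk]
      calc ins μ Sup N (K + m * K) y ≤ (1 - μ s ^ K) * (1 - μ s ^ K) ^ m :=
            ins_exit hnn hsum hs hs0 K (m * K) _ y (pow_nonneg hbase m) ih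
              (hK y hy.1 hy.2)
        _ = (1 - μ s ^ K) ^ (m + 1) := (pow_succ' _ _).symm

lemma wald (hnn : ∀ x : ℤ, 0 ≤ μ x) (hsum : ∑ x ∈ Sup, μ x = 1)
    (hE : ∑ x ∈ Sup, (x : ℝ) * μ x = 0) {M : ℤ} (hM0 : 0 ≤ M)
    (hM : ∀ x ∈ Sup, x ≤ M) (n : ℕ) :
    ∀ y : ℤ, 1 ≤ y →
      (y : ℝ) ≤ ((y : ℝ) + (M : ℝ) * n) * (1 - probWithin μ Sup n y) := by
  induction n with
  | zero =>
    intro y hy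
    have h0 : probWithin μ Sup 0 y = 0 := by
      simp only [probWithin]; rw [if_neg (by omega)]
    rw [h0]; push_cast; ring_nf; exact le_rfl
  | succ n ih =>
    intro y hy
    have hp : probWithin μ Sup (n + 1) y = ∑ x ∈ Sup, μ x * probWithin μ Sup n (y + x) := by
      simp only [probWithin]; rw [if_neg (by omega)]
    have key : ∀ x ∈ Sup,
        μ x * ((y : ℝ) + (x : ℝ))
          ≤ μ x * (((y : ℝ) + (M : ℝ) * (n + 1)) * (1 - probWithin μ Sup n (y + x))) := by
      intro x hx
      by_cases hyx : y + x ≤ 0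
      · rw [probWithin_of_nonpos hyx]
        have hc : (y : ℝ) + (x : ℝ) ≤ 0 := by exact_mod_cast hyx
        simp only [sub_self, mul_zero]
        exact mul_nonpos_of_nonneg_of_nonpos (hnn x) hc
      · have h1 : (1 : ℤ) ≤ y + x := by omega
        have IH := ih (y + x) h1
        push_cast at IH
        have hq : 0 ≤ 1 - probWithin μ Sup n (y + x) := by
          linarith [probWithin_le_one hnn hsum n (y + x)]
        have hxM : (x : ℝ) ≤ (M : ℝ) := by exact_mod_cast hM x hx
        have hco : ((y : ℝ) + (x : ℝ)) + (M : ℝ) * n ≤ (y : ℝ) + (M : ℝ) * (n + 1) := by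
          push_cast; linarith
        refine mul_le_mul_of_nonneg_left ?_ (hnn x)
        calc (y : ℝ) + (x : ℝ)
            ≤ (((y : ℝ) + (x : ℝ)) + (M : ℝ) * n) * (1 - probWithin μ Sup n (y + x)) := IH
          _ ≤ ((y : ℝ) + (M : ℝ) * (n + 1)) * (1 - probWithin μ Sup n (y + x)) :=
              mul_le_mul_of_nonneg_right hco hq
    have hone : ∑ x ∈ Sup, μ x * (1 - probWithin μ Sup n (y + x))
        = 1 - probWithin μ Sup (n + 1) y := by
      rw [hp]
      simp only [mul_sub, mul_one]
      rw [Finset.sum_sub_distrib, hsum]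
    calc (y : ℝ) = ∑ x ∈ Sup, μ x * ((y : ℝ) + (x : ℝ)) := (mean_id hsum hE y).symm
      _ ≤ ∑ x ∈ Sup, μ x * (((y : ℝ) + (M : ℝ) * (n + 1)) * (1 - probWithin μ Sup n (y + x))) :=
          Finset.sum_le_sum key
      _ = ((y : ℝ) + (M : ℝ) * (n + 1)) * ∑ x ∈ Sup, μ x * (1 - probWithin μ Sup n (y + x)) := by
          rw [Finset.mul_sum]; exact Finset.sum_congr rfl fun x _ => by ring
      _ = ((y : ℝ) + (M : ℝ) * (n + 1)) * (1 - probWithin μ Sup (n + 1) y) := by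
          rw [hone]
      _ = ((y : ℝ) + (M : ℝ) * ((n : ℕ) + 1 : ℕ)) * (1 - probWithin μ Sup ((n : ℕ) + 1) y) := by
          push_cast; ring

end SymWalkAux

open SymWalkAux in
/-- If `μ 0 < 1` and the expected increment is `0`, then the walk reaches a value `≤ 0`
with probability `1` from every start, but the expected number of steps until
absorption (which equals `∑ₙ P(T > n) = ∑ₙ (1 - probWithin μ Sup n x₀)`) is infinite
for every start `x₀ ≥ 1`. -/
theorem symmetric_walk_ast_not_past (μ : ℤ → ℝ) (Sup : Finset ℤ)
    (hnn : ∀ x : ℤ, 0 ≤ μ x) (hsupp : ∀ x ∉ Sup, μ x = 0)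
    (hsum : ∑ x ∈ Sup, μ x = 1) (h0 : μ 0 < 1)
    (hE : ∑ x ∈ Sup, (x : ℝ) * μ x = 0) :
    (∀ x₀ : ℤ, termProb μ Sup x₀ = 1) ∧
    (∀ x₀ : ℤ, 1 ≤ x₀ → ¬ Summable (fun n : ℕ => 1 - probWithin μ Sup n x₀)) := by
  -- a nonzero step with positive probability
  obtain ⟨s, hs, hs0, hsne⟩ : ∃ s, s ∈ Sup ∧ 0 < μ s ∧ s ≠ 0 := by
    by_contra h
    push_neg at h
    have hz : ∀ b ∈ Sup, b ≠ 0 → μ b = 0 := by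
      intro b hb hb0
      rcases lt_or_eq_of_le (hnn b) with hlt | heq
      · exact absurd (h b hb hlt) hb0
      · exact heq.symm
    have h1 := Finset.sum_eq_single (s := Sup) (f := μ) 0 hz (fun h0' => hsupp 0 h0')
    rw [hsum] at h1
    linarith
  -- a bound on the steps
  set Mn : ℕ := Sup.sup (fun x => x.natAbs) with hMn
  set M : ℤ := (Mn : ℤ) with hMdef
  have hM0 : (0 : ℤ) ≤ M := by positivity
  have hM : ∀ x ∈ Sup, -M ≤ x ∧ x ≤ M := by
    intro x hx
    have h1 : x.natAbs ≤ Mn := Finset.le_sup (f := fun x => x.natAbs) hx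
    omega
  have hMr : (0 : ℝ) ≤ (M : ℝ) := by exact_mod_cast hM0
  -- basic facts about termProb
  have hub : ∀ x₀ : ℤ, termProb μ Sup x₀ ≤ 1 := fun x₀ =>
    ciSup_le fun n => probWithin_le_one hnn hsum n x₀
  have hbdd : ∀ x₀ : ℤ, BddAbove (Set.range fun n : ℕ => probWithin μ Sup n x₀) := fun x₀ =>
    ⟨1, Set.forall_mem_range.mpr fun n => probWithin_le_one hnn hsum n x₀⟩
  have hge : ∀ (x₀ : ℤ) (n : ℕ), probWithin μ Sup n x₀ ≤ termProb μ Sup x₀ := fun x₀ n =>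
    le_ciSup (hbdd x₀) n
  constructor
  · -- almost sure termination
    intro x₀
    refine le_antisymm (hub x₀) ?_
    by_cases hx : x₀ ≤ 0
    · have h1 := hge x₀ 0
      rwa [probWithin_of_nonpos hx] at h1
    · push_neg at hx
      have key : ∀ K : ℕ, 1 ≤ K → 1 - ((x₀ : ℝ) + (M : ℝ)) / K ≤ termProb μ Sup x₀ := by
        intro K hK1
        have hNpos : (0 : ℝ) < (K : ℝ) := by exact_mod_cast Nat.pos_of_ne_zero (by omega)
        have hKexit : ∀ y : ℤ, 0 < y → y < (K : ℤ) →
            (y + (K : ℤ) * s ≤ 0 ∨ (K : ℤ) ≤ y + (K : ℤ) * s) := by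
          intro y hy1 hy2
          rcases lt_or_gt_of_ne hsne with hneg | hpos
          · left
            have hKs : (K : ℤ) * s ≤ (K : ℤ) * (-1) :=
              mul_le_mul_of_nonneg_left (by omega) (by positivity)
            linarith
          · right
            have hKs : (K : ℤ) * 1 ≤ (K : ℤ) * s :=
              mul_le_mul_of_nonneg_left (by omega) (by positivity)
            linarith
        have hm : ∀ m : ℕ,
            1 - ((x₀ : ℝ) + (M : ℝ)) / K - (1 - μ s ^ K) ^ m ≤ termProb μ Sup x₀ := by
          intro m
          have h1 : low μ Sup (K : ℤ) (m * K) x₀ ≤ termProb μ Sup x₀ :=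
            le_trans (low_le_probWithin hnn _ _) (hge x₀ (m * K))
          have h2 := lhi_sum (N := (K : ℤ)) hsum (m * K) x₀
          have h3 := hi_bound (N := (K : ℤ)) hnn hsum hE hM hM0 (m * K) x₀ (by omega)
          have h4 : low μ Sup (K : ℤ) (m * K) x₀ ≤ 1 := by
            have := hi_nonneg (Sup := Sup) (N := (K : ℤ)) hnn (m * K) x₀
            have := ins_nonneg (Sup := Sup) (N := (K : ℤ)) hnn (m * K) x₀
            linarith
          have h5 : hi μ Sup (K : ℤ) (m * K) x₀ ≤ ((x₀ : ℝ) + (M : ℝ)) / K := by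
            rw [le_div_iff₀ hNpos]
            have h3' : (K : ℝ) * hi μ Sup (K : ℤ) (m * K) x₀
                ≤ (x₀ : ℝ) + (M : ℝ) * low μ Sup (K : ℤ) (m * K) x₀ := by
              have hcast : (((K : ℤ) : ℝ)) = (K : ℝ) := by push_cast; ring
              rw [← hcast]; exact h3
            nlinarith
          have h6 := ins_geom hnn hsum hs hs0 K hKexit m x₀
          linarith
        have hδ1 : μ s ≤ 1 := by
          calc μ s ≤ ∑ x ∈ Sup, μ x := Finset.single_le_sum (fun x _ => hnn x) hs
            _ = 1 := hsum
        have hδK : 0 < μ s ^ K := pow_pos hs0 K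
        have hge0 : 0 ≤ 1 - μ s ^ K := by
          have := pow_le_one₀ hs0.le hδ1 (n := K); linarith
        have htend : Filter.Tendsto (fun m : ℕ => (1 - μ s ^ K) ^ m)
            Filter.atTop (nhds 0) :=
          tendsto_pow_atTop_nhds_zero_of_lt_one hge0 (by linarith)
        have hlim : Filter.Tendsto
            (fun m : ℕ => 1 - ((x₀ : ℝ) + (M : ℝ)) / K - (1 - μ s ^ K) ^ m)
            Filter.atTop (nhds (1 - ((x₀ : ℝ) + (M : ℝ)) / K)) := by
          simpa using htend.const_sub (1 - ((x₀ : ℝ) + (M : ℝ)) / K)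
        exact le_of_tendsto hlim (Filter.Eventually.of_forall hm)
      have houter : Filter.Tendsto (fun K : ℕ => 1 - ((x₀ : ℝ) + (M : ℝ)) / K)
          Filter.atTop (nhds 1) := by
        have := tendsto_const_div_atTop_nhds_zero_nat ((x₀ : ℝ) + (M : ℝ))
        simpa using this.const_sub 1
      exact le_of_tendsto houter (Filter.eventually_atTop.mpr ⟨1, key⟩)
  · -- infinite expected absorption time
    intro x₀ hx₀ hsummable
    have ha0 : ∀ n : ℕ, 0 ≤ 1 - probWithin μ Sup n x₀ := fun n => by
      linarith [probWithin_le_one hnn hsum n x₀]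
    have hM' : ∀ x ∈ Sup, x ≤ M := fun x hx => (hM x hx).2
    have hx₀r : (1 : ℝ) ≤ (x₀ : ℝ) := by exact_mod_cast hx₀
    set ε : ℝ := 1 / ((x₀ : ℝ) + 2 * (M : ℝ) + 1) with hεdef
    have hεpos : 0 < ε := by positivity
    obtain ⟨t, ht⟩ := summable_iff_vanishing.mp hsummable (Set.Iio ε) (Iio_mem_nhds hεpos)
    obtain ⟨n₀, hn₀⟩ := t.exists_nat_subset_range
    have hdisj : Disjoint (Finset.Icc n₀ (2 * n₀)) t := by
      refine Finset.disjoint_left.mpr fun k hk hkt => ?_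
      have h1 := hn₀ hkt
      have h2 := Finset.mem_Icc.mp hk
      have h3 := Finset.mem_range.mp h1
      omega
    have hTε : (∑ k ∈ Finset.Icc n₀ (2 * n₀), (1 - probWithin μ Sup k x₀)) < ε :=
      ht _ hdisj
    have hcard : (Finset.Icc n₀ (2 * n₀)).card = n₀ + 1 := by rw [Nat.card_Icc]; omega
    have havg : ((n₀ : ℝ) + 1) * (1 - probWithin μ Sup (2 * n₀) x₀)
        ≤ ∑ k ∈ Finset.Icc n₀ (2 * n₀), (1 - probWithin μ Sup k x₀) := by
      have h1 := Finset.card_nsmul_le_sum (Finset.Icc n₀ (2 * n₀))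
        (fun k => 1 - probWithin μ Sup k x₀) (1 - probWithin μ Sup (2 * n₀) x₀)
        (fun k hk => sub_le_sub_left (probWithin_mono hnn (Finset.mem_Icc.mp hk).2 x₀) 1)
      rw [hcard] at h1
      calc ((n₀ : ℝ) + 1) * (1 - probWithin μ Sup (2 * n₀) x₀)
          = ((n₀ + 1 : ℕ) : ℝ) * (1 - probWithin μ Sup (2 * n₀) x₀) := by push_cast; ring
        _ = (n₀ + 1 : ℕ) • (1 - probWithin μ Sup (2 * n₀) x₀) := (nsmul_eq_mul _ _).symm
        _ ≤ _ := h1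
    set T : ℝ := ∑ k ∈ Finset.Icc n₀ (2 * n₀), (1 - probWithin μ Sup k x₀) with hTdef
    have hTnn : 0 ≤ T := Finset.sum_nonneg fun k _ => ha0 k
    have hw := wald hnn hsum hE hM0 hM' (2 * n₀) x₀ hx₀
    push_cast at hw
    -- derive the contradiction
    set A : ℝ := 1 - probWithin μ Sup (2 * n₀) x₀ with hAdef
    have hA0 : 0 ≤ A := ha0 _
    have hn0 : (0 : ℝ) ≤ (n₀ : ℝ) := Nat.cast_nonneg n₀
    -- hw : x₀ ≤ (x₀ + M * (2 n₀)) * A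
    have s1 : (x₀ : ℝ) * ((n₀ : ℝ) + 1)
        ≤ ((x₀ : ℝ) + (M : ℝ) * (2 * (n₀ : ℝ))) * A * ((n₀ : ℝ) + 1) :=
      mul_le_mul_of_nonneg_right hw (by linarith)
    have s2 : ((x₀ : ℝ) + (M : ℝ) * (2 * (n₀ : ℝ))) * A * ((n₀ : ℝ) + 1)
        ≤ ((x₀ : ℝ) + (M : ℝ) * (2 * (n₀ : ℝ))) * T := by
      have h1 : ((x₀ : ℝ) + (M : ℝ) * (2 * (n₀ : ℝ))) * (((n₀ : ℝ) + 1) * A)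
          ≤ ((x₀ : ℝ) + (M : ℝ) * (2 * (n₀ : ℝ))) * T :=
        mul_le_mul_of_nonneg_left havg (by nlinarith)
      nlinarith [h1]
    have s3 : ((x₀ : ℝ) + (M : ℝ) * (2 * (n₀ : ℝ))) * T
        ≤ ((x₀ : ℝ) + 2 * (M : ℝ)) * ((n₀ : ℝ) + 1) * T := by
      have : (x₀ : ℝ) + (M : ℝ) * (2 * (n₀ : ℝ))
          ≤ ((x₀ : ℝ) + 2 * (M : ℝ)) * ((n₀ : ℝ) + 1) := by nlinarith
      exact mul_le_mul_of_nonneg_right this hTnn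
    have s4 : (x₀ : ℝ) ≤ ((x₀ : ℝ) + 2 * (M : ℝ)) * T := by
      have h1 : (x₀ : ℝ) * ((n₀ : ℝ) + 1)
          ≤ ((x₀ : ℝ) + 2 * (M : ℝ)) * T * ((n₀ : ℝ) + 1) := by nlinarith
      have h2 : (0 : ℝ) < (n₀ : ℝ) + 1 := by linarith
      exact le_of_mul_le_mul_right (by linarith [h1]) h2
    have s5 : ((x₀ : ℝ) + 2 * (M : ℝ)) * T < 1 := by
      have hden : (0 : ℝ) < (x₀ : ℝ) + 2 * (M : ℝ) + 1 := by linarith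
      have hεval : ε * ((x₀ : ℝ) + 2 * (M : ℝ) + 1) = 1 := by
        rw [hεdef]; field_simp
      nlinarith [mul_le_mul_of_nonneg_left (le_of_lt hTε) (show (0:ℝ) ≤ (x₀ : ℝ) + 2 * (M : ℝ) by linarith)]
    linarith
end

section
/- If there exists an embedding from a rewrite sequence tree T₁ into a rewrite sequence tree T₂, then the expected derivation length of T₁ is at most that of T₂: edl(T₁) ≤ edl(T₂). -/
open scoped ENNReal

/-- Nodes of a finitely-branching tree given by a branching function `nc`:
the node `v` (a position, i.e. list of child indices) is a node iff it is the root `[]`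
or `v = w ++ [i]` for a node `w` with `i < nc w`. -/
inductive IsNodeOf (nc : List ℕ → ℕ) : List ℕ → Prop
  | root : IsNodeOf nc []
  | child {v : List ℕ} {i : ℕ} : IsNodeOf nc v → i < nc v → IsNodeOf nc (v ++ [i])

/-- A (possibly infinite) rewrite sequence tree: every node `v` carries a probability
`prob v ∈ (0,1]` and an object `label v`; the root has probability `1`, and for every
inner node the probabilities of its children sum up to the probability of the node. -/
structure RST (A : Type) where
  nc : List ℕ → ℕ
  prob : List ℕ → ℝ≥0∞
  label : List ℕ → A
  prob_root : prob [] = 1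
  prob_pos : ∀ v, IsNodeOf nc v → 0 < prob v
  prob_le_one : ∀ v, IsNodeOf nc v → prob v ≤ 1
  prob_sum : ∀ v, IsNodeOf nc v → 0 < nc v →
      ∑ i ∈ Finset.range (nc v), prob (v ++ [i]) = prob v

namespace RST
variable {A : Type}

def IsNode (T : RST A) (v : List ℕ) : Prop := IsNodeOf T.nc v

def IsLeaf (T : RST A) (v : List ℕ) : Prop := T.IsNode v ∧ T.nc v = 0

/-- The termination probability `|T|`: the sum of the probabilities of all leaves. -/
noncomputable def termProb (T : RST A) : ℝ≥0∞ :=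
  ∑' v : {v : List ℕ // T.IsLeaf v}, T.prob v

/-- The expected derivation length `edl(T)`: `∞` if `|T| < 1`, and otherwise the sum
over all leaves `v` of `depth(v) · prob v` (the depth of a node is its list length). -/
noncomputable def edl (T : RST A) : ℝ≥0∞ :=
  if T.termProb < 1 then ⊤
  else ∑' v : {v : List ℕ // T.IsLeaf v}, (v.1.length : ℝ≥0∞) * T.prob v

end RST

section Aux
variable {A : Type}

/-- Finset of nodes of `T` at depth `d`. -/
noncomputable def levelF (T : RST A) : ℕ → Finset (List ℕ)
  | 0 => {[]}
  | d+1 => (levelF T d).biUnion (fun v => (Finset.range (T.nc v)).image (fun i => v ++ [i]))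

lemma mem_levelF {T : RST A} : ∀ {d : ℕ} {v : List ℕ},
    v ∈ levelF T d ↔ T.IsNode v ∧ v.length = d := by
  intro d
  induction d with
  | zero =>
    intro v
    simp only [levelF, Finset.mem_singleton]
    constructor
    · rintro rfl; exact ⟨IsNodeOf.root, rfl⟩
    · rintro ⟨_, h⟩; exact List.eq_nil_of_length_eq_zero h
  | succ d ih =>
    intro v
    simp only [levelF, Finset.mem_biUnion, Finset.mem_image, Finset.mem_range]
    constructor
    · rintro ⟨w, hw, i, hi, rfl⟩
      obtain ⟨hn, hl⟩ := ih.mp hw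
      exact ⟨IsNodeOf.child hn hi, by simp [hl]⟩
    · rintro ⟨hn, hl⟩
      cases hn with
      | root => simp at hl
      | @child w i hw hi =>
          refine ⟨w, ih.mpr ⟨hw, ?_⟩, i, hi, rfl⟩
          simp at hl; omega

lemma levelF_node {T : RST A} {d : ℕ} {v : List ℕ} (h : v ∈ levelF T d) : T.IsNode v :=
  (mem_levelF.mp h).1

/-- Total probability of nodes at depth `d`. -/
noncomputable def levSum (T : RST A) (d : ℕ) : ℝ≥0∞ := ∑ v ∈ levelF T d, T.prob v

/-- Total probability of leaves at depth `d`. -/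
noncomputable def leafSum (T : RST A) (d : ℕ) : ℝ≥0∞ :=
  ∑ v ∈ (levelF T d).filter (fun v => T.nc v = 0), T.prob v

lemma levSum_succ (T : RST A) (d : ℕ) :
    levSum T (d+1) + leafSum T d = levSum T d := by
  have hdisj : (↑(levelF T d) : Set (List ℕ)).PairwiseDisjoint
      (fun v => (Finset.range (T.nc v)).image (fun i => v ++ [i])) := by
    intro w hw w' hw' hne
    simp only [Finset.disjoint_left, Finset.mem_image, Finset.mem_range]
    rintro x ⟨i, hi, rfl⟩ ⟨j, hj, hx⟩
    refine hne ?_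
    have := congrArg List.dropLast hx
    simpa using this.symm
  have h1 : levSum T (d+1)
      = ∑ w ∈ levelF T d, ∑ i ∈ Finset.range (T.nc w), T.prob (w ++ [i]) := by
    rw [levSum]
    show ∑ v ∈ (levelF T d).biUnion _, T.prob v = _
    rw [Finset.sum_biUnion hdisj]
    refine Finset.sum_congr rfl (fun w _ => ?_)
    rw [Finset.sum_image]
    intro a _ b _ hab
    simpa using hab
  have h2 : leafSum T d = ∑ w ∈ levelF T d, (if T.nc w = 0 then T.prob w else 0) := by
    rw [leafSum, Finset.sum_filter]
  rw [h1, h2, ← Finset.sum_add_distrib]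
  refine Finset.sum_congr rfl (fun w hw => ?_)
  by_cases h : T.nc w = 0
  · simp [h]
  · rw [if_neg h, T.prob_sum w (levelF_node hw) (Nat.pos_of_ne_zero h), add_zero]

lemma levSum_add (T : RST A) (d : ℕ) :
    levSum T d + ∑ e ∈ Finset.range d, leafSum T e = 1 := by
  induction d with
  | zero => simp [levSum, levelF, T.prob_root]
  | succ d ih =>
    rw [Finset.sum_range_succ, ← ih, ← levSum_succ T d]
    ring


/-- Finset of leaves of depth `< d`. -/
noncomputable def leafF (T : RST A) (d : ℕ) : Finset (List ℕ) :=
  (Finset.range d).biUnion (fun e => (levelF T e).filter (fun v => T.nc v = 0))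

/-- Finset of non-root nodes of depth `≤ d`. -/
noncomputable def nodeF (T : RST A) (d : ℕ) : Finset (List ℕ) :=
  (Finset.range d).biUnion (fun e => levelF T (e+1))

lemma mem_leafF {T : RST A} {d : ℕ} {v : List ℕ} :
    v ∈ leafF T d ↔ T.IsLeaf v ∧ v.length < d := by
  simp only [leafF, Finset.mem_biUnion, Finset.mem_range, Finset.mem_filter, mem_levelF,
    RST.IsLeaf]
  constructor
  · rintro ⟨e, he, ⟨⟨hn, hl⟩, hc⟩⟩; exact ⟨⟨hn, hc⟩, hl ▸ he⟩
  · rintro ⟨⟨hn, hc⟩, hl⟩; exact ⟨v.length, hl, ⟨⟨hn, rfl⟩, hc⟩⟩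

lemma mem_nodeF {T : RST A} {d : ℕ} {v : List ℕ} :
    v ∈ nodeF T d ↔ T.IsNode v ∧ v ≠ [] ∧ v.length ≤ d := by
  simp only [nodeF, Finset.mem_biUnion, Finset.mem_range, mem_levelF]
  constructor
  · rintro ⟨e, he, hn, hl⟩
    refine ⟨hn, ?_, by omega⟩
    intro h; rw [h] at hl; simp at hl
  · rintro ⟨hn, hne, hl⟩
    have : 0 < v.length := List.length_pos_iff.mpr hne
    exact ⟨v.length - 1, by omega, hn, by omega⟩

lemma sum_leafF (T : RST A) (d : ℕ) :
    ∑ v ∈ leafF T d, T.prob v = ∑ e ∈ Finset.range d, leafSum T e := by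
  have hdisj : (↑(Finset.range d) : Set ℕ).PairwiseDisjoint
      (fun e => (levelF T e).filter (fun v => T.nc v = 0)) := by
    intro e he e' he' hne
    simp only [Finset.disjoint_left, Finset.mem_filter, mem_levelF]
    rintro x ⟨⟨_, hl⟩, _⟩ ⟨⟨_, hl'⟩, _⟩
    exact hne (by omega)
  rw [leafF, Finset.sum_biUnion hdisj]
  rfl

lemma sum_nodeF (T : RST A) (d : ℕ) :
    ∑ v ∈ nodeF T d, T.prob v = ∑ e ∈ Finset.range d, levSum T (e+1) := by
  have hdisj : (↑(Finset.range d) : Set ℕ).PairwiseDisjoint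
      (fun e => levelF T (e+1)) := by
    intro e he e' he' hne
    simp only [Finset.disjoint_left, mem_levelF]
    rintro x ⟨_, hl⟩ ⟨_, hl'⟩
    exact hne (by omega)
  rw [nodeF, Finset.sum_biUnion hdisj]
  rfl

/-- indicator form of the termination probability. -/
lemma termProb_eq_tsum (T : RST A) :
    T.termProb = ∑' v : List ℕ, Set.indicator {v | T.IsLeaf v} T.prob v :=
  tsum_subtype {v | T.IsLeaf v} T.prob

lemma sum_leafF_ind (T : RST A) (d : ℕ) :
    ∑ v ∈ leafF T d, Set.indicator {v | T.IsLeaf v} T.prob v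
      = ∑ e ∈ Finset.range d, leafSum T e := by
  rw [← sum_leafF]
  refine Finset.sum_congr rfl (fun v hv => ?_)
  exact Set.indicator_of_mem (show v ∈ {v | T.IsLeaf v} from (mem_leafF.mp hv).1) T.prob

lemma leafSum_range_le_termProb (T : RST A) (d : ℕ) :
    ∑ e ∈ Finset.range d, leafSum T e ≤ T.termProb := by
  rw [termProb_eq_tsum, ← sum_leafF_ind]
  exact ENNReal.sum_le_tsum _

lemma termProb_le_one (T : RST A) : T.termProb ≤ 1 := by
  rw [termProb_eq_tsum, ENNReal.tsum_eq_iSup_sum]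
  refine iSup_le (fun F => ?_)
  set d := F.sup List.length + 1 with hd
  have h1 : ∑ v ∈ F, Set.indicator {v | T.IsLeaf v} T.prob v
      ≤ ∑ v ∈ leafF T d, Set.indicator {v | T.IsLeaf v} T.prob v := by
    rw [show (∑ v ∈ F, Set.indicator {v | T.IsLeaf v} T.prob v)
        = ∑ v ∈ F ∩ leafF T d, Set.indicator {v | T.IsLeaf v} T.prob v from ?_]
    · exact Finset.sum_le_sum_of_subset (Finset.inter_subset_right)
    · refine (Finset.sum_subset Finset.inter_subset_left (fun x hx hx' => ?_)).symm
      by_cases hleaf : T.IsLeaf x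
      · exfalso
        refine hx' (Finset.mem_inter.mpr ⟨hx, mem_leafF.mpr ⟨hleaf, ?_⟩⟩)
        have := Finset.le_sup (f := List.length) hx
        omega
      · exact Set.indicator_of_notMem (show x ∉ {v | T.IsLeaf v} from hleaf) T.prob
  refine h1.trans ?_
  rw [sum_leafF_ind]
  calc ∑ e ∈ Finset.range d, leafSum T e
      ≤ levSum T d + ∑ e ∈ Finset.range d, leafSum T e := le_add_self
    _ = 1 := levSum_add T d

lemma levSum_ge (T : RST A) (d : ℕ) : 1 - T.termProb ≤ levSum T d := by
  rw [tsub_le_iff_right]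
  calc (1:ℝ≥0∞) = levSum T d + ∑ e ∈ Finset.range d, leafSum T e := (levSum_add T d).symm
    _ ≤ levSum T d + T.termProb := by
        exact add_le_add_right (leafSum_range_le_termProb T d) _

/-- The sum of probabilities over all non-root nodes. -/
noncomputable def N (T : RST A) : ℝ≥0∞ :=
  ∑' v : List ℕ, Set.indicator {v | T.IsNode v ∧ v ≠ []} T.prob v

lemma sum_nodeF_ind (T : RST A) (d : ℕ) :
    ∑ v ∈ nodeF T d, Set.indicator {v | T.IsNode v ∧ v ≠ []} T.prob v
      = ∑ e ∈ Finset.range d, levSum T (e+1) := by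
  rw [← sum_nodeF]
  refine Finset.sum_congr rfl (fun v hv => ?_)
  obtain ⟨h1, h2, _⟩ := mem_nodeF.mp hv
  exact Set.indicator_of_mem (show v ∈ {v | T.IsNode v ∧ v ≠ []} from ⟨h1, h2⟩) T.prob

lemma N_eq (T : RST A) : N T = ∑' d : ℕ, levSum T (d+1) := by
  apply le_antisymm
  · rw [N, ENNReal.tsum_eq_iSup_sum]
    refine iSup_le (fun F => ?_)
    set d := F.sup List.length with hd
    have h1 : ∑ v ∈ F, Set.indicator {v | T.IsNode v ∧ v ≠ []} T.prob v
        = ∑ v ∈ F ∩ nodeF T d, Set.indicator {v | T.IsNode v ∧ v ≠ []} T.prob v := by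
      refine (Finset.sum_subset Finset.inter_subset_left (fun x hx hx' => ?_)).symm
      by_cases hmem : T.IsNode x ∧ x ≠ []
      · exfalso
        refine hx' (Finset.mem_inter.mpr ⟨hx, mem_nodeF.mpr ⟨hmem.1, hmem.2, ?_⟩⟩)
        exact Finset.le_sup (f := List.length) hx
      · exact Set.indicator_of_notMem
          (show x ∉ {v | T.IsNode v ∧ v ≠ []} from hmem) T.prob
    rw [h1]
    calc ∑ v ∈ F ∩ nodeF T d, Set.indicator {v | T.IsNode v ∧ v ≠ []} T.prob v
        ≤ ∑ v ∈ nodeF T d, Set.indicator {v | T.IsNode v ∧ v ≠ []} T.prob v :=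
          Finset.sum_le_sum_of_subset Finset.inter_subset_right
      _ = ∑ e ∈ Finset.range d, levSum T (e+1) := sum_nodeF_ind T d
      _ ≤ ∑' d : ℕ, levSum T (d+1) := ENNReal.sum_le_tsum _
  · rw [ENNReal.tsum_eq_iSup_sum]
    refine iSup_le (fun F => ?_)
    set d := F.sup id + 1 with hd
    calc ∑ e ∈ F, levSum T (e+1)
        ≤ ∑ e ∈ Finset.range d, levSum T (e+1) := by
          refine Finset.sum_le_sum_of_subset (fun x hx => ?_)
          rw [Finset.mem_range]
          have := Finset.le_sup (f := id) hx
          simp only [id] at this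
          omega
      _ = ∑ v ∈ nodeF T d, Set.indicator {v | T.IsNode v ∧ v ≠ []} T.prob v :=
          (sum_nodeF_ind T d).symm
      _ ≤ N T := ENNReal.sum_le_tsum _


lemma N_eq_top_of_termProb_lt_one (T : RST A) (h : T.termProb < 1) : N T = ⊤ := by
  rw [N_eq]
  have hc : (1 : ℝ≥0∞) - T.termProb ≠ 0 := by
    rw [Ne, tsub_eq_zero_iff_le, not_le]
    exact h
  refine top_le_iff.mp ?_
  calc (⊤:ℝ≥0∞) = ∑' _d : ℕ, ((1:ℝ≥0∞) - T.termProb) :=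
        (ENNReal.tsum_const_eq_top_of_ne_zero hc).symm
    _ ≤ ∑' d : ℕ, levSum T (d+1) := ENNReal.tsum_le_tsum (fun d => levSum_ge T (d+1))

/-- Total probability of leaves of depth at least `d`. -/
noncomputable def Mq (T : RST A) (d : ℕ) : ℝ≥0∞ :=
  ∑' v : List ℕ, Set.indicator {v | T.IsLeaf v ∧ d ≤ v.length} T.prob v

lemma Mq_add (T : RST A) (d : ℕ) :
    Mq T d + ∑ e ∈ Finset.range d, leafSum T e = T.termProb := by
  have hsplit : ∀ v : List ℕ,
      Set.indicator {v | T.IsLeaf v} T.prob v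
      = Set.indicator {v | T.IsLeaf v ∧ d ≤ v.length} T.prob v
        + Set.indicator {v | T.IsLeaf v ∧ v.length < d} T.prob v := by
    intro v
    by_cases h2 : T.IsLeaf v
    · by_cases hlen : d ≤ v.length
      · rw [Set.indicator_of_mem (show v ∈ {v | T.IsLeaf v} from h2) T.prob,
          Set.indicator_of_mem
            (show v ∈ {v | T.IsLeaf v ∧ d ≤ v.length} from ⟨h2, hlen⟩) T.prob,
          Set.indicator_of_notMem
            (show v ∉ {v | T.IsLeaf v ∧ v.length < d} from
              fun hh => Nat.lt_irrefl _ (Nat.lt_of_lt_of_le hh.2 hlen)) T.prob,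
          add_zero]
      · rw [Set.indicator_of_mem (show v ∈ {v | T.IsLeaf v} from h2) T.prob,
          Set.indicator_of_mem
            (show v ∈ {v | T.IsLeaf v ∧ v.length < d} from ⟨h2, by omega⟩) T.prob,
          Set.indicator_of_notMem
            (show v ∉ {v | T.IsLeaf v ∧ d ≤ v.length} from fun hh => hlen hh.2) T.prob,
          zero_add]
    · rw [Set.indicator_of_notMem (show v ∉ {v | T.IsLeaf v} from h2) T.prob,
        Set.indicator_of_notMem
          (show v ∉ {v | T.IsLeaf v ∧ d ≤ v.length} from fun hh => h2 hh.1) T.prob,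
        Set.indicator_of_notMem
          (show v ∉ {v | T.IsLeaf v ∧ v.length < d} from fun hh => h2 hh.1) T.prob,
        add_zero]
  have hfin : (∑' v : List ℕ, Set.indicator {v | T.IsLeaf v ∧ v.length < d} T.prob v)
      = ∑ e ∈ Finset.range d, leafSum T e := by
    have h0 : ∀ v ∉ leafF T d,
        Set.indicator {v | T.IsLeaf v ∧ v.length < d} T.prob v = 0 := by
      intro v hv
      refine Set.indicator_of_notMem (fun hh => hv (mem_leafF.mpr ⟨hh.1, hh.2⟩)) T.prob
    rw [tsum_eq_sum h0, ← sum_leafF]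
    refine Finset.sum_congr rfl (fun v hv => ?_)
    obtain ⟨h1, h2⟩ := mem_leafF.mp hv
    exact Set.indicator_of_mem
      (show v ∈ {v | T.IsLeaf v ∧ v.length < d} from ⟨h1, h2⟩) T.prob
  rw [termProb_eq_tsum, tsum_congr hsplit, ENNReal.tsum_add, hfin]
  rfl

lemma Mq_eq_levSum (T : RST A) (h : T.termProb = 1) (d : ℕ) : Mq T d = levSum T d := by
  have h1 := Mq_add T d
  have h2 := levSum_add T d
  rw [h] at h1
  have hS : (∑ e ∈ Finset.range d, leafSum T e) ≠ ⊤ :=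
    ne_top_of_le_ne_top ENNReal.one_ne_top (by rw [← h2]; exact le_add_self)
  have h3 : Mq T d + ∑ e ∈ Finset.range d, leafSum T e
      = levSum T d + ∑ e ∈ Finset.range d, leafSum T e := h1.trans h2.symm
  refine (ENNReal.add_right_inj hS).mp ?_
  rw [add_comm _ (Mq T d), add_comm _ (levSum T d)]
  exact h3

lemma edl_eq_N (T : RST A) : T.edl = N T := by
  by_cases h : T.termProb < 1
  · rw [RST.edl, if_pos h, N_eq_top_of_termProb_lt_one T h]
  · have h1 : T.termProb = 1 := le_antisymm (termProb_le_one T) (not_lt.mp h)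
    rw [RST.edl, if_neg h]
    have hsub : (∑' v : {v : List ℕ // T.IsLeaf v}, (v.1.length : ℝ≥0∞) * T.prob v)
        = ∑' v : List ℕ, Set.indicator {v | T.IsLeaf v}
            (fun v => (v.length : ℝ≥0∞) * T.prob v) v :=
      tsum_subtype {v | T.IsLeaf v} (fun v => (v.length : ℝ≥0∞) * T.prob v)
    have key : ∀ v : List ℕ,
        Set.indicator {v | T.IsLeaf v} (fun v => (v.length : ℝ≥0∞) * T.prob v) v
        = ∑' d : ℕ, Set.indicator {v | T.IsLeaf v ∧ d + 1 ≤ v.length} T.prob v := by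
      intro v
      by_cases hleaf : T.IsLeaf v
      · rw [Set.indicator_of_mem (show v ∈ {v | T.IsLeaf v} from hleaf)]
        have h0 : ∀ d ∉ Finset.range v.length,
            Set.indicator {v | T.IsLeaf v ∧ d + 1 ≤ v.length} T.prob v = 0 := by
          intro d hd
          rw [Finset.mem_range, not_lt] at hd
          exact Set.indicator_of_notMem
            (fun hh => Nat.lt_irrefl _ (Nat.lt_of_lt_of_le hh.2 (by omega))) T.prob
        rw [tsum_eq_sum h0]
        have h3 : ∀ d ∈ Finset.range v.length,
            Set.indicator {v | T.IsLeaf v ∧ d + 1 ≤ v.length} T.prob v = T.prob v := by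
          intro d hd
          exact Set.indicator_of_mem
            (show v ∈ {v | T.IsLeaf v ∧ d + 1 ≤ v.length} from
              ⟨hleaf, Finset.mem_range.mp hd⟩) T.prob
        rw [Finset.sum_congr rfl h3, Finset.sum_const, Finset.card_range, nsmul_eq_mul]
      · rw [Set.indicator_of_notMem (show v ∉ {v | T.IsLeaf v} from hleaf)]
        symm
        refine ENNReal.tsum_eq_zero.mpr (fun d => ?_)
        exact Set.indicator_of_notMem (fun hh => hleaf hh.1) T.prob
    rw [hsub, tsum_congr key, ENNReal.tsum_comm]
    have : ∀ d : ℕ,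
        (∑' v : List ℕ, Set.indicator {v | T.IsLeaf v ∧ d + 1 ≤ v.length} T.prob v)
        = levSum T (d+1) := fun d => Mq_eq_levSum T h1 (d+1)
    rw [tsum_congr this, ← N_eq]

end Aux

/-- An embedding between rewrite sequence trees: an injective map on nodes that
preserves probabilities and paths (the ancestor relation, i.e. the prefix order). -/
structure RSTEmbedding {A B : Type} (T₁ : RST A) (T₂ : RST B) where
  toFun : List ℕ → List ℕ
  node : ∀ v, T₁.IsNode v → T₂.IsNode (toFun v)
  inj : ∀ v w, T₁.IsNode v → T₁.IsNode w → toFun v = toFun w → v = w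
  prob_eq : ∀ v, T₁.IsNode v → T₂.prob (toFun v) = T₁.prob v
  path : ∀ v w, T₁.IsNode v → T₁.IsNode w → v <+: w → toFun v <+: toFun w

lemma N_le_of_embedding {A B : Type} (T₁ : RST A) (T₂ : RST B) (f : RSTEmbedding T₁ T₂) :
    N T₁ ≤ N T₂ := by
  have hroot : T₁.IsNode [] := IsNodeOf.root
  have hne : ∀ v : List ℕ, T₁.IsNode v → v ≠ [] → f.toFun v ≠ [] := by
    intro v hv hvne hemp
    have hpre : f.toFun [] <+: f.toFun v := f.path [] v hroot hv List.nil_prefix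
    rw [hemp] at hpre
    have h0 : f.toFun [] = [] := List.prefix_nil.mp hpre
    exact hvne (f.inj [] v hroot hv (h0.trans hemp.symm)).symm
  rw [show N T₁ = ∑' v : ↥{v : List ℕ | T₁.IsNode v ∧ v ≠ []}, T₁.prob ↑v from
      (tsum_subtype {v : List ℕ | T₁.IsNode v ∧ v ≠ []} T₁.prob).symm,
    show N T₂ = ∑' v : ↥{v : List ℕ | T₂.IsNode v ∧ v ≠ []}, T₂.prob ↑v from
      (tsum_subtype {v : List ℕ | T₂.IsNode v ∧ v ≠ []} T₂.prob).symm]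
  have hmem : ∀ v : ↥{v : List ℕ | T₁.IsNode v ∧ v ≠ []},
      T₁.IsNode v.1 ∧ v.1 ≠ [] := fun v => v.2
  refine Summable.tsum_le_tsum_of_inj
    (fun v => (⟨f.toFun v.1, f.node v.1 (hmem v).1, hne v.1 (hmem v).1 (hmem v).2⟩ :
      ↥{v : List ℕ | T₂.IsNode v ∧ v ≠ []}))
    (fun v w hvw => ?_) (fun c _ => zero_le) (fun v => ?_)
    ENNReal.summable ENNReal.summable
  · exact Subtype.ext (f.inj v.1 w.1 (hmem v).1 (hmem w).1 (congrArg Subtype.val hvw))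
  · exact (f.prob_eq v.1 (hmem v).1).ge


/-- If there is an embedding from `T₁` into `T₂`, then `edl(T₁) ≤ edl(T₂)`. -/
theorem edl_le_of_embedding {A B : Type} (T₁ : RST A) (T₂ : RST B)
    (h : Nonempty (RSTEmbedding T₁ T₂)) : T₁.edl ≤ T₂.edl := by
  obtain ⟨f⟩ := h
  rw [edl_eq_N T₁, edl_eq_N T₂]
  exact N_le_of_embedding T₁ T₂ f
end

section
/- In a rewrite sequence tree, for every node w, the sum of the probabilities of the leaves that are descendants of w (including w itself if it is a leaf) is at most p_w; moreover if the termination probability of the whole tree equals 1, this sum equals p_w for every node w. -/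
open scoped ENNReal

section Aux
variable {nc : List ℕ → ℕ}

lemma exists_child_prefix {v w : List ℕ} (hv : IsNodeOf nc v) (h : w <+: v) (hne : w ≠ v) :
    ∃ i, i < nc w ∧ w ++ [i] <+: v := by
  induction hv with
  | root => exact absurd (List.prefix_nil.mp h) hne
  | @child u j hu hj ih =>
    rcases List.prefix_concat_iff.mp h with rfl | h'
    · exact absurd rfl hne
    · rcases eq_or_ne w u with rfl | hne'
      · exact ⟨j, hj, List.prefix_refl _⟩
      · obtain ⟨i, hi, hp⟩ := ih h' hne'
        exact ⟨i, hi, hp.trans ⟨[j], rfl⟩⟩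

lemma getD_eq_of_child_prefix {w v : List ℕ} {i : ℕ} (h : w ++ [i] <+: v) :
    v.getD w.length 0 = i := by
  obtain ⟨t, ht⟩ := h
  have hv : v = w ++ ([i] ++ t) := by rw [← ht]; simp
  rw [hv]
  simp [List.getD_eq_getElem?_getD, List.getElem_append_right]

lemma child_prefix_unique {w v : List ℕ} {i j : ℕ} (h : w ++ [i] <+: v)
    (h2 : w ++ [j] <+: v) : i = j :=
  (getD_eq_of_child_prefix h).symm.trans (getD_eq_of_child_prefix h2)

lemma eq_of_prefix_of_leaf {v w : List ℕ} (hv : IsNodeOf nc v) (h : w <+: v)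
    (h0 : nc w = 0) : v = w := by
  by_contra hne
  obtain ⟨i, hi, -⟩ := exists_child_prefix hv h (fun h' => hne h'.symm)
  omega

end Aux

namespace RST
variable {A : Type}

lemma tsum_pref (T : RST A) (w : List ℕ) :
    ∑' v : {v : List ℕ // T.IsLeaf v ∧ w <+: v}, T.prob v
      = ∑' v : List ℕ, Set.indicator {u | T.IsLeaf u ∧ w <+: u} T.prob v :=
  tsum_subtype _ _

lemma leafSum_children (T : RST A) (w : List ℕ) (h0 : 0 < T.nc w) :
    ∑' v : {v : List ℕ // T.IsLeaf v ∧ w <+: v}, T.prob v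
      = ∑ i ∈ Finset.range (T.nc w),
          ∑' v : {v : List ℕ // T.IsLeaf v ∧ w ++ [i] <+: v}, T.prob v := by
  classical
  have hind : ∀ v : List ℕ,
      Set.indicator {u | T.IsLeaf u ∧ w <+: u} T.prob v
        = ∑ i ∈ Finset.range (T.nc w),
            Set.indicator {u | T.IsLeaf u ∧ w ++ [i] <+: u} T.prob v := by
    intro v
    simp only [Set.indicator_apply, Set.mem_setOf_eq]
    by_cases hv : T.IsLeaf v ∧ w <+: v
    · obtain ⟨hleaf, hp⟩ := hv
      have hne : w ≠ v := by
        rintro rfl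
        exact absurd hleaf.2 h0.ne'
      obtain ⟨i, hi, hip⟩ := exists_child_prefix hleaf.1 hp hne
      rw [if_pos ⟨hleaf, hp⟩]
      rw [Finset.sum_eq_single i]
      · rw [if_pos ⟨hleaf, hip⟩]
      · intro j _ hji
        rw [if_neg]
        rintro ⟨-, hjp⟩
        exact hji (child_prefix_unique hjp hip)
      · exact fun h => absurd (Finset.mem_range.mpr hi) h
    · rw [if_neg hv]
      symm
      apply Finset.sum_eq_zero
      intro j _
      rw [if_neg]
      rintro ⟨hleaf, hjp⟩
      exact hv ⟨hleaf, (List.prefix_append w [j]).trans hjp⟩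
  rw [T.tsum_pref w]
  simp_rw [hind]
  rw [Summable.tsum_finsetSum (fun i _ => ENNReal.summable)]
  exact Finset.sum_congr rfl fun i _ => (T.tsum_pref (w ++ [i])).symm

lemma finsum_le (T : RST A) (n : ℕ) : ∀ (w : List ℕ), T.IsNode w →
    ∀ s : Finset (List ℕ),
      (∀ v ∈ s, T.IsLeaf v ∧ w <+: v ∧ v.length ≤ w.length + n) →
      ∑ v ∈ s, T.prob v ≤ T.prob w := by
  classical
  induction n with
  | zero =>
    intro w hw s hs
    have hsub : s ⊆ {w} := by
      intro v hv
      obtain ⟨-, hp, hl⟩ := hs v hv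
      simp [(hp.eq_of_length_le (by simpa using hl)).symm]
    calc ∑ v ∈ s, T.prob v ≤ ∑ v ∈ {w}, T.prob v :=
          Finset.sum_le_sum_of_subset hsub
      _ = T.prob w := by simp
  | succ n ih =>
    intro w hw s hs
    by_cases h0 : T.nc w = 0
    · have hsub : s ⊆ {w} := by
        intro v hv
        obtain ⟨hleaf, hp, -⟩ := hs v hv
        simp [eq_of_prefix_of_leaf hleaf.1 hp h0]
      calc ∑ v ∈ s, T.prob v ≤ ∑ v ∈ {w}, T.prob v :=
            Finset.sum_le_sum_of_subset hsub
        _ = T.prob w := by simp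
    · have h0' : 0 < T.nc w := Nat.pos_of_ne_zero h0
      set g : List ℕ → ℕ := fun v => v.getD w.length 0 with hg
      have key : ∀ v ∈ s, g v < T.nc w ∧ w ++ [g v] <+: v := by
        intro v hv
        obtain ⟨hleaf, hp, -⟩ := hs v hv
        have hne : w ≠ v := by
          rintro rfl
          exact absurd hleaf.2 h0
        obtain ⟨i, hi, hip⟩ := exists_child_prefix hleaf.1 hp hne
        have : g v = i := getD_eq_of_child_prefix hip
        rw [this]
        exact ⟨hi, hip⟩
      rw [← Finset.sum_fiberwise_of_maps_to
        (fun v hv => Finset.mem_range.mpr (key v hv).1) T.prob]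
      calc ∑ i ∈ Finset.range (T.nc w), ∑ v ∈ s.filter (fun v => g v = i), T.prob v
          ≤ ∑ i ∈ Finset.range (T.nc w), T.prob (w ++ [i]) := by
            apply Finset.sum_le_sum
            intro i hi
            apply ih (w ++ [i]) (hw.child (Finset.mem_range.mp hi))
            intro v hv
            rw [Finset.mem_filter] at hv
            obtain ⟨hvs, hgi⟩ := hv
            obtain ⟨hleaf, hp, hl⟩ := hs v hvs
            have hcp := (key v hvs).2
            rw [hgi] at hcp
            refine ⟨hleaf, hcp, ?_⟩
            simp only [List.length_append, List.length_singleton]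
            omega
        _ = T.prob w := T.prob_sum w hw h0'

lemma leafSum_le (T : RST A) (w : List ℕ) (hw : T.IsNode w) :
    ∑' v : {v : List ℕ // T.IsLeaf v ∧ w <+: v}, T.prob v ≤ T.prob w := by
  classical
  rw [ENNReal.tsum_eq_iSup_sum]
  apply iSup_le
  intro s
  have himg : ∑ x ∈ s, T.prob x.1
      = ∑ v ∈ s.image Subtype.val, T.prob v :=
    (Finset.sum_image (fun x _ y _ h => Subtype.ext h)).symm
  rw [himg]
  apply T.finsum_le ((s.image Subtype.val).sup List.length) w hw
  intro v hv
  obtain ⟨x, hx, rfl⟩ := Finset.mem_image.mp hv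
  exact ⟨x.2.1, x.2.2, le_trans (Finset.le_sup hv) (Nat.le_add_left _ _)⟩

end RST

/-- For every node `w` of a rewrite sequence tree, the sum of the probabilities of the
leaves that are descendants of `w` (including `w` itself if it is a leaf) is at most
`prob w`; moreover, if the termination probability of the whole tree is `1`, then this
sum equals `prob w` for every node `w`. -/
theorem leaf_sum_below_node {A : Type} (T : RST A) :
    (∀ w, T.IsNode w →
      ∑' v : {v : List ℕ // T.IsLeaf v ∧ w <+: v}, T.prob v ≤ T.prob w) ∧
    (T.termProb = 1 → ∀ w, T.IsNode w →
      ∑' v : {v : List ℕ // T.IsLeaf v ∧ w <+: v}, T.prob v = T.prob w) := by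
  refine ⟨fun w hw => T.leafSum_le w hw, fun hterm w hw => ?_⟩
  induction hw with
  | root =>
    have he : ∑' v : {v : List ℕ // T.IsLeaf v ∧ [] <+: v}, T.prob v = T.termProb := by
      apply (Equiv.subtypeEquivRight (q := T.IsLeaf) (fun v => by simp)).tsum_eq
        (f := fun v : {v : List ℕ // T.IsLeaf v} => T.prob v.1)
    rw [he, hterm, T.prob_root]
  | @child u j hu hj ih =>
    have h0 : 0 < T.nc u := Nat.pos_of_ne_zero (by omega)
    have hdec := T.leafSum_children u h0
    have hsum := T.prob_sum u hu h0
    have heq : ∑ i ∈ Finset.range (T.nc u),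
        ∑' v : {v : List ℕ // T.IsLeaf v ∧ u ++ [i] <+: v}, T.prob v
        = ∑ i ∈ Finset.range (T.nc u), T.prob (u ++ [i]) := by
      rw [← hdec, ih, ← hsum]
    have hmem : j ∈ Finset.range (T.nc u) := Finset.mem_range.mpr hj
    rw [← Finset.add_sum_erase _ _ hmem, ← Finset.add_sum_erase _ _ hmem] at heq
    set R := ∑ i ∈ (Finset.range (T.nc u)).erase j, T.prob (u ++ [i]) with hR
    have hRle : ∑ i ∈ (Finset.range (T.nc u)).erase j,
        (∑' v : {v : List ℕ // T.IsLeaf v ∧ u ++ [i] <+: v}, T.prob v) ≤ R :=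
      Finset.sum_le_sum fun i hi =>
        T.leafSum_le (u ++ [i]) (hu.child (Finset.mem_range.mp (Finset.mem_of_mem_erase hi)))
    have hRtop : R ≠ ⊤ := by
      have : R ≤ T.prob u := by
        rw [← hsum]
        exact Finset.sum_le_sum_of_subset (Finset.erase_subset _ _)
      exact ne_top_of_le_ne_top (by simp) (this.trans (T.prob_le_one u hu))
    have hge : T.prob (u ++ [j]) ≤
        ∑' v : {v : List ℕ // T.IsLeaf v ∧ u ++ [j] <+: v}, T.prob v := by
      have : T.prob (u ++ [j]) + R ≤
          (∑' v : {v : List ℕ // T.IsLeaf v ∧ u ++ [j] <+: v}, T.prob v) + R := by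
        rw [← heq]
        exact add_le_add le_rfl hRle
      exact (ENNReal.add_le_add_iff_right hRtop).mp this
    exact le_antisymm (T.leafSum_le (u ++ [j]) (hu.child hj)) hge
end

section
/- Define maxOO(t,s) as the maximal cardinality of a set of pairwise orthogonal positions of s at which t matches. Then for s = f(s₁,...,s_k): maxOO(t,s) = max(Σ_{j=1}^{k} maxOO(t,s_j), 1) if t matches s at the root position, and maxOO(t,s) = Σ_{j=1}^{k} maxOO(t,s_j) otherwise; and for s a variable or constant, maxOO(t,s) = 1 if t matches s and 0 otherwise. -/
namespace Tm
variable {S V : Type}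

/-- The subterm of `t` at position `π`, if `π` is a position of `t`. -/
def subtermAt : Tm S V → List ℕ → Option (Tm S V)
  | t, [] => some t
  | var _, _ :: _ => none
  | app _ [], _ :: _ => none
  | app _ (u :: _), 0 :: π => subtermAt u π
  | app f (_ :: ts), (i + 1) :: π => subtermAt (app f ts) (i :: π)

/-- `t` matches `s` at position `π`. -/
def Matches (t s : Tm S V) (π : List ℕ) : Prop :=
  ∃ σ : V → Tm S V, subtermAt s π = some (subst σ t)


/-- Two positions are orthogonal if neither is a prefix of the other. -/
def Orthogonal (π₁ π₂ : List ℕ) : Prop := ¬ π₁ <+: π₂ ∧ ¬ π₂ <+: π₁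

/-- The maximal cardinality of a set of pairwise orthogonal positions of `s` at which
`t` matches. -/
noncomputable def maxOO (t s : Tm S V) : ℕ :=
  sSup {n | ∃ Sset : Finset (List ℕ),
    (∀ π ∈ Sset, Matches t s π) ∧
    (∀ π₁ ∈ Sset, ∀ π₂ ∈ Sset, π₁ ≠ π₂ → Orthogonal π₁ π₂) ∧
    Sset.card = n}

-- helper lemmas
lemma subtermAt_app_cons (f : S) : ∀ (ss : List (Tm S V)) (j : ℕ) (π : List ℕ),
    subtermAt (app f ss) (j :: π) = ss[j]?.bind (fun u => subtermAt u π)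
  | [], j, π => by cases j <;> simp [subtermAt]
  | u :: ts, 0, π => by simp [subtermAt]
  | u :: ts, j + 1, π => by
    rw [show subtermAt (app f (u :: ts)) ((j+1) :: π) = subtermAt (app f ts) (j :: π) by
        rw [subtermAt], subtermAt_app_cons f ts j π]
    simp

lemma Matches.pos {t s : Tm S V} {π : List ℕ} (h : Matches t s π) : (subtermAt s π).isSome := by
  obtain ⟨σ, h⟩ := h; rw [h]; rfl

lemma pos_var {x : V} {π : List ℕ} (h : (subtermAt (var x : Tm S V) π).isSome) : π = [] := by
  cases π with
  | nil => rfl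
  | cons a π => simp [subtermAt] at h

lemma matches_app_cons {t : Tm S V} {f : S} {ss : List (Tm S V)} {j : ℕ} {π : List ℕ} {u : Tm S V}
    (hu : ss[j]? = some u) : Matches t (app f ss) (j :: π) ↔ Matches t u π := by
  unfold Matches
  rw [subtermAt_app_cons, hu]
  simp

def oset (t s : Tm S V) : Set ℕ :=
  {n | ∃ Sset : Finset (List ℕ),
    (∀ π ∈ Sset, Matches t s π) ∧
    (∀ π₁ ∈ Sset, ∀ π₂ ∈ Sset, π₁ ≠ π₂ → Orthogonal π₁ π₂) ∧
    Sset.card = n}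

lemma maxOO_eq (t s : Tm S V) : maxOO t s = sSup (oset t s) := rfl

lemma zero_mem_oset (t s : Tm S V) : 0 ∈ oset t s := ⟨∅, by simp, by simp, by simp⟩

lemma sum_map_eq_sum_range {α : Type*} (g : α → ℕ) : ∀ l : List α,
    (l.map g).sum = ∑ j ∈ Finset.range l.length, ((l[j]?.map g).getD 0)
  | [] => by simp
  | a :: l => by
    rw [List.map_cons, List.sum_cons, List.length_cons, Finset.sum_range_succ',
      sum_map_eq_sum_range g l]
    simp [Nat.add_comm]

lemma sum_sizeOf_lt : ∀ (l : List (Tm S V)), (l.map sizeOf).sum < sizeOf l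
  | [] => by simp
  | a :: l => by
    have := sum_sizeOf_lt l
    simp only [List.map_cons, List.sum_cons, List.cons.sizeOf_spec]
    omega



open Finset in
lemma card_le_sum_aux {Q : Tm S V → List ℕ → Prop}
    (hQpos : ∀ s π, Q s π → (subtermAt s π).isSome)
    (hQstep : ∀ (f : S) (ss : List (Tm S V)) (j : ℕ) (π' : List ℕ) (u : Tm S V),
      Q (app f ss) (j :: π') → ss[j]? = some u → Q u π')
    (g : Tm S V → ℕ) (f : S) (ss : List (Tm S V))
    (hg : ∀ (j : ℕ) (u : Tm S V), ss[j]? = some u → ∀ T : Finset (List ℕ),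
      (∀ π ∈ T, Q u π) → (∀ π₁ ∈ T, ∀ π₂ ∈ T, π₁ ≠ π₂ → Orthogonal π₁ π₂) → T.card ≤ g u)
    (Sset : Finset (List ℕ))
    (h1 : ∀ π ∈ Sset, Q (app f ss) π)
    (h2 : ∀ π₁ ∈ Sset, ∀ π₂ ∈ Sset, π₁ ≠ π₂ → Orthogonal π₁ π₂)
    (h3 : [] ∉ Sset) :
    Sset.card ≤ (ss.map g).sum := by
  classical
  -- every element has the form j :: τ with ss[j]? = some u
  have hform : ∀ π ∈ Sset, ∃ j τ u, π = j :: τ ∧ ss[j]? = some u := by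
    intro π hπ
    match π, hπ with
    | [], hπ => exact absurd hπ h3
    | j :: τ, hπ =>
      have := hQpos _ _ (h1 _ hπ)
      rw [subtermAt_app_cons] at this
      match hu : ss[j]?, this with
      | some u, _ => exact ⟨j, τ, u, rfl, hu⟩
      | none, h => rw [hu] at this; simp at this
  have hmem : ∀ π ∈ Sset, π.headI ∈ Finset.range ss.length := by
    intro π hπ
    obtain ⟨j, τ, u, rfl, hu⟩ := hform π hπ
    simpa [Finset.mem_range] using (List.getElem?_eq_some_iff.mp hu).1
  rw [Finset.card_eq_sum_card_fiberwise hmem, sum_map_eq_sum_range]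
  refine Finset.sum_le_sum ?_
  intro j hj
  rw [Finset.mem_range] at hj
  have hu : ss[j]? = some ss[j] := List.getElem?_eq_getElem hj
  rw [hu]
  simp only [Option.map_some, Option.getD_some]
  set F := Sset.filter (fun π => π.headI = j) with hF
  have hcons : ∀ π ∈ F, π = j :: π.tail := by
    intro π hπ
    rw [hF, Finset.mem_filter] at hπ
    obtain ⟨j', τ, u, rfl, _⟩ := hform π hπ.1
    simpa using hπ.2 ▸ rfl
  have hcard : F.card = (F.image List.tail).card := by
    rw [Finset.card_image_of_injOn]
    intro π₁ h₁ π₂ h₂ he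
    rw [hcons π₁ h₁, hcons π₂ h₂, he]
  rw [hcard]
  refine hg j ss[j] hu _ ?_ ?_
  · intro τ hτ
    rw [Finset.mem_image] at hτ
    obtain ⟨π, hπ, rfl⟩ := hτ
    have hc := hcons π hπ
    rw [hF, Finset.mem_filter] at hπ
    have := h1 π hπ.1
    rw [hc] at this
    exact hQstep f ss j π.tail ss[j] this hu
  · intro τ₁ hτ₁ τ₂ hτ₂ hne
    rw [Finset.mem_image] at hτ₁ hτ₂
    obtain ⟨π₁, hπ₁, rfl⟩ := hτ₁
    obtain ⟨π₂, hπ₂, rfl⟩ := hτ₂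
    have hc₁ := hcons π₁ hπ₁; have hc₂ := hcons π₂ hπ₂
    rw [hF, Finset.mem_filter] at hπ₁ hπ₂
    have hne' : π₁ ≠ π₂ := fun h => hne (by rw [h])
    have := h2 π₁ hπ₁.1 π₂ hπ₂.1 hne'
    rw [hc₁, hc₂] at this
    constructor
    · exact fun h => this.1 (List.cons_prefix_cons.mpr ⟨rfl, h⟩)
    · exact fun h => this.2 (List.cons_prefix_cons.mpr ⟨rfl, h⟩)


lemma card_le_sizeOf_aux : ∀ (n : ℕ) (s : Tm S V), sizeOf s ≤ n →
    ∀ Sset : Finset (List ℕ), (∀ π ∈ Sset, (subtermAt s π).isSome) →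
    (∀ π₁ ∈ Sset, ∀ π₂ ∈ Sset, π₁ ≠ π₂ → Orthogonal π₁ π₂) →
    Sset.card ≤ sizeOf s := by
  intro n
  induction n with
  | zero =>
    intro s hs
    cases s with
    | var x => simp [Tm.var.sizeOf_spec] at hs
    | app f ss => simp [Tm.app.sizeOf_spec] at hs
  | succ n ih =>
    intro s hs Sset h1 h2
    by_cases hnil : [] ∈ Sset
    · have hsub : Sset ⊆ {[]} := by
        intro π hπ
        rw [Finset.mem_singleton]
        by_contra hne
        exact (h2 [] hnil π hπ (Ne.symm hne)).1 (List.nil_prefix)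
      calc Sset.card ≤ ({[]} : Finset (List ℕ)).card := Finset.card_le_card hsub
        _ = 1 := Finset.card_singleton _
        _ ≤ sizeOf s := by cases s <;> simp
    · cases s with
      | var x =>
        have : Sset = ∅ := by
          rw [Finset.eq_empty_iff_forall_notMem]
          intro π hπ
          exact hnil (pos_var (h1 π hπ) ▸ hπ)
        simp [this]
      | app f ss =>
        have hb : Sset.card ≤ (ss.map sizeOf).sum := by
          refine card_le_sum_aux (Q := fun s π => (subtermAt s π).isSome)
            (fun _ _ h => h) ?_ sizeOf f ss ?_ Sset h1 h2 hnil
          · intro f' ss' j π' u hQ hu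
            rw [subtermAt_app_cons, hu] at hQ
            simpa using hQ
          · intro j u hu T hT1 hT2
            have hjl := (List.getElem?_eq_some_iff.mp hu)
            obtain ⟨hjlt, hje⟩ := hjl
            have hmem : u ∈ ss := hje ▸ List.getElem_mem hjlt
            have hlt : sizeOf u < sizeOf (app f ss) := by
              have := List.sizeOf_lt_of_mem hmem
              simp only [Tm.app.sizeOf_spec]
              omega
            exact ih u (by omega) T hT1 hT2
        have hss := sum_sizeOf_lt ss
        have : sizeOf ss ≤ sizeOf (app f ss) := by simp [Tm.app.sizeOf_spec]
        omega

lemma bddAbove_oset (t s : Tm S V) : BddAbove (oset t s) := by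
  refine ⟨sizeOf s, ?_⟩
  rintro n ⟨Sset, h1, h2, rfl⟩
  exact card_le_sizeOf_aux (sizeOf s) s le_rfl Sset (fun π hπ => (h1 π hπ).pos) h2

lemma maxOO_mem (t s : Tm S V) : ∃ W : Finset (List ℕ),
    (∀ π ∈ W, Matches t s π) ∧
    (∀ π₁ ∈ W, ∀ π₂ ∈ W, π₁ ≠ π₂ → Orthogonal π₁ π₂) ∧ W.card = maxOO t s := by
  have := Nat.sSup_mem ⟨0, zero_mem_oset t s⟩ (bddAbove_oset t s)
  obtain ⟨W, h1, h2, h3⟩ := this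
  exact ⟨W, h1, h2, h3⟩

lemma card_le_maxOO {t s : Tm S V} {Sset : Finset (List ℕ)}
    (h1 : ∀ π ∈ Sset, Matches t s π)
    (h2 : ∀ π₁ ∈ Sset, ∀ π₂ ∈ Sset, π₁ ≠ π₂ → Orthogonal π₁ π₂) :
    Sset.card ≤ maxOO t s :=
  le_csSup (bddAbove_oset t s) ⟨Sset, h1, h2, rfl⟩

lemma exists_attain (t : Tm S V) (f : S) (ss : List (Tm S V)) :
    ∃ W : Finset (List ℕ), (∀ π ∈ W, Matches t (app f ss) π) ∧
      (∀ π₁ ∈ W, ∀ π₂ ∈ W, π₁ ≠ π₂ → Orthogonal π₁ π₂) ∧ [] ∉ W ∧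
      W.card = (ss.map (maxOO t)).sum := by
  classical
  choose Wf hW1 hW2 hW3 using maxOO_mem t
  refine ⟨(Finset.range ss.length).biUnion
      (fun j => ((ss[j]?.elim ∅ Wf).image (j :: ·))), ?_, ?_, ?_, ?_⟩
  · intro π hπ
    rw [Finset.mem_biUnion] at hπ
    obtain ⟨j, hj, hπ⟩ := hπ
    rw [Finset.mem_range] at hj
    rw [Finset.mem_image] at hπ
    obtain ⟨τ, hτ, rfl⟩ := hπ
    have hu : ss[j]? = some ss[j] := List.getElem?_eq_getElem hj
    rw [hu] at hτ
    exact (matches_app_cons hu).mpr (hW1 _ _ hτ)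
  · intro π₁ hπ₁ π₂ hπ₂ hne
    rw [Finset.mem_biUnion] at hπ₁ hπ₂
    obtain ⟨j₁, hj₁, hπ₁⟩ := hπ₁
    obtain ⟨j₂, hj₂, hπ₂⟩ := hπ₂
    rw [Finset.mem_range] at hj₁ hj₂
    rw [Finset.mem_image] at hπ₁ hπ₂
    obtain ⟨τ₁, hτ₁, rfl⟩ := hπ₁
    obtain ⟨τ₂, hτ₂, rfl⟩ := hπ₂
    by_cases hjj : j₁ = j₂
    · subst hjj
      have hu : ss[j₁]? = some ss[j₁] := List.getElem?_eq_getElem hj₁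
      rw [hu] at hτ₁ hτ₂
      have hnτ : τ₁ ≠ τ₂ := fun h => hne (by rw [h])
      have := hW2 _ _ hτ₁ _ hτ₂ hnτ
      exact ⟨fun h => this.1 (List.cons_prefix_cons.mp h).2,
             fun h => this.2 (List.cons_prefix_cons.mp h).2⟩
    · exact ⟨fun h => hjj (List.cons_prefix_cons.mp h).1,
             fun h => hjj ((List.cons_prefix_cons.mp h).1).symm⟩
  · intro h
    rw [Finset.mem_biUnion] at h
    obtain ⟨j, _, h⟩ := h
    rw [Finset.mem_image] at h
    obtain ⟨τ, _, h⟩ := h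
    exact List.cons_ne_nil _ _ h
  · rw [Finset.card_biUnion, sum_map_eq_sum_range]
    · refine Finset.sum_congr rfl ?_
      intro j hj
      rw [Finset.mem_range] at hj
      have hu : ss[j]? = some ss[j] := List.getElem?_eq_getElem hj
      rw [hu]
      simp only [Option.elim_some, Option.map_some, Option.getD_some]
      rw [Finset.card_image_of_injective _ (fun a b h => by injection h), hW3]
    · intro j₁ h₁ j₂ h₂ hne
      simp only [Finset.disjoint_left]
      intro π hπ₁ hπ₂
      rw [Finset.mem_image] at hπ₁ hπ₂
      obtain ⟨τ₁, _, rfl⟩ := hπ₁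
      obtain ⟨τ₂, _, h⟩ := hπ₂
      exact hne (by injection h.symm)


lemma card_le_sum_matches {t : Tm S V} {f : S} {ss : List (Tm S V)} {Sset : Finset (List ℕ)}
    (h1 : ∀ π ∈ Sset, Matches t (app f ss) π)
    (h2 : ∀ π₁ ∈ Sset, ∀ π₂ ∈ Sset, π₁ ≠ π₂ → Orthogonal π₁ π₂)
    (h3 : [] ∉ Sset) :
    Sset.card ≤ (ss.map (maxOO t)).sum := by
  refine card_le_sum_aux (Q := Matches t) (fun _ _ h => h.pos) ?_ (maxOO t) f ss ?_ Sset h1 h2 h3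
  · intro f' ss' j π' u hQ hu
    exact (matches_app_cons hu).mp hQ
  · intro j u hu T hT1 hT2
    exact card_le_maxOO hT1 hT2

end Tm

/-- The recursion for `maxOO`: for `s = f(s₁,…,s_k)`, `maxOO(t,s)` equals
`max (Σⱼ maxOO(t,sⱼ)) 1` if `t` matches `s` at the root and `Σⱼ maxOO(t,sⱼ)`
otherwise; for `s` a variable (or constant, covered by `k = 0`), `maxOO(t,s)` is `1`
if `t` matches `s` and `0` otherwise. -/
theorem maxOO_recursion {S V : Type} (t : Tm S V) :
    (∀ (f : S) (ss : List (Tm S V)),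
      (Tm.Matches t (Tm.app f ss) [] →
        Tm.maxOO t (Tm.app f ss) = max ((ss.map (Tm.maxOO t)).sum) 1) ∧
      (¬ Tm.Matches t (Tm.app f ss) [] →
        Tm.maxOO t (Tm.app f ss) = (ss.map (Tm.maxOO t)).sum)) ∧
    (∀ x : V,
      (Tm.Matches t (Tm.var x) [] → Tm.maxOO t (Tm.var x) = 1) ∧
      (¬ Tm.Matches t (Tm.var x) [] → Tm.maxOO t (Tm.var x) = 0)) := by
  open Tm in
  refine ⟨fun f ss => ⟨fun hroot => ?_, fun hroot => ?_⟩,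
    fun x => ⟨fun hroot => ?_, fun hroot => ?_⟩⟩
  · -- app, root match
    rw [maxOO_eq]
    apply le_antisymm
    · refine csSup_le ⟨0, zero_mem_oset t _⟩ ?_
      rintro n ⟨Sset, h1, h2, rfl⟩
      by_cases hnil : [] ∈ Sset
      · have hsub : Sset ⊆ {[]} := by
          intro π hπ
          rw [Finset.mem_singleton]
          by_contra hne
          exact (h2 [] hnil π hπ (Ne.symm hne)).1 List.nil_prefix
        calc Sset.card ≤ 1 := by
              simpa using Finset.card_le_card hsub
          _ ≤ max (ss.map (maxOO t)).sum 1 := le_max_right _ _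
      · exact le_trans (card_le_sum_matches h1 h2 hnil) (le_max_left _ _)
    · rw [max_le_iff]
      constructor
      · obtain ⟨W, h1, h2, _, h4⟩ := exists_attain t f ss
        exact h4 ▸ le_csSup (bddAbove_oset t _) ⟨W, h1, h2, rfl⟩
      · refine le_csSup (bddAbove_oset t _) ⟨{[]}, ?_, ?_, Finset.card_singleton _⟩
        · intro π hπ; rw [Finset.mem_singleton] at hπ; exact hπ ▸ hroot
        · intro π₁ hπ₁ π₂ hπ₂ hne
          rw [Finset.mem_singleton] at hπ₁ hπ₂
          exact absurd (hπ₁.trans hπ₂.symm) hne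
  · -- app, no root match
    rw [maxOO_eq]
    apply le_antisymm
    · refine csSup_le ⟨0, zero_mem_oset t _⟩ ?_
      rintro n ⟨Sset, h1, h2, rfl⟩
      have hnil : [] ∉ Sset := fun h => hroot (h1 [] h)
      exact card_le_sum_matches h1 h2 hnil
    · obtain ⟨W, h1, h2, _, h4⟩ := exists_attain t f ss
      exact h4 ▸ le_csSup (bddAbove_oset t _) ⟨W, h1, h2, rfl⟩
  · -- var, match
    rw [maxOO_eq]
    apply le_antisymm
    · refine csSup_le ⟨0, zero_mem_oset t _⟩ ?_
      rintro n ⟨Sset, h1, h2, rfl⟩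
      have hsub : Sset ⊆ {[]} := by
        intro π hπ
        rw [Finset.mem_singleton]
        exact pos_var (h1 π hπ).pos
      simpa using Finset.card_le_card hsub
    · refine le_csSup (bddAbove_oset t _) ⟨{[]}, ?_, ?_, Finset.card_singleton _⟩
      · intro π hπ; rw [Finset.mem_singleton] at hπ; exact hπ ▸ hroot
      · intro π₁ hπ₁ π₂ hπ₂ hne
        rw [Finset.mem_singleton] at hπ₁ hπ₂
        exact absurd (hπ₁.trans hπ₂.symm) hne
  · -- var, no match
    rw [maxOO_eq]
    refine Nat.le_zero.mp (csSup_le ⟨0, zero_mem_oset t _⟩ ?_)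
    rintro n ⟨Sset, h1, h2, rfl⟩
    have : Sset = ∅ := by
      rw [Finset.eq_empty_iff_forall_notMem]
      intro π hπ
      exact hroot ((pos_var (h1 π hπ).pos) ▸ h1 π hπ)
    simp [this]
end
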